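/- arXiv:1807.05257 — 7 statements merged into one kernel-verified Lean document; each statement's English description precedes it below -/
import Mathlib

section
/- The function h(t) = (1 - e^{-at})/(1 - e^{-t}) is strictly increasing on (0, ∞) for every fixed a in (0,1). -/
theorem stmt_1 (a : ℝ) (ha : a ∈ Set.Ioo (0:ℝ) 1) :
    StrictMonoOn (fun t : ℝ => (1 - Real.exp (-a * t)) / (1 - Real.exp (-t)))
      (Set.Ioi 0) := by
  obtain ⟨ha0, ha1⟩ := ha
  have key : ∀ t : ℝ, 0 < t → Real.exp (a * t) - 1 < a * (Real.exp t - 1) := by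
    intro t ht
    have h := strictConvexOn_exp.2 (Set.mem_univ (0:ℝ)) (Set.mem_univ t)
      (ne_of_lt ht) (by linarith : (0:ℝ) < 1 - a) ha0 (by ring)
    simp [smul_eq_mul] at h
    nlinarith [h]
  have hvne : ∀ t : ℝ, 0 < t → (0:ℝ) < 1 - Real.exp (-t) := by
    intro t ht
    have : Real.exp (-t) < 1 := by
      rw [Real.exp_lt_one_iff]; linarith
    linarith
  have hderiv : ∀ t ∈ Set.Ioi (0:ℝ),
      HasDerivAt (fun t : ℝ => (1 - Real.exp (-a * t)) / (1 - Real.exp (-t)))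
        ((a * Real.exp (-a * t) * (1 - Real.exp (-t)) -
          (1 - Real.exp (-a * t)) * Real.exp (-t)) / (1 - Real.exp (-t)) ^ 2) t := by
    intro t ht
    have ht0 : (0:ℝ) < t := ht
    have hu : HasDerivAt (fun t : ℝ => 1 - Real.exp (-a * t)) (a * Real.exp (-a * t)) t := by
      have h1 : HasDerivAt (fun t : ℝ => -a * t) (-a) t := by
        simpa using (hasDerivAt_id t).const_mul (-a)
      have h2 := h1.exp
      have h3 : HasDerivAt (fun x : ℝ => (1:ℝ) - Real.exp (-a * x)) (0 - Real.exp (-a * t) * -a) t :=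
        (hasDerivAt_const t (1:ℝ)).sub h2
      convert h3 using 1; ring
    have hv : HasDerivAt (fun t : ℝ => 1 - Real.exp (-t)) (Real.exp (-t)) t := by
      have h1 : HasDerivAt (fun t : ℝ => -t) (-1) t := by
        simpa using (hasDerivAt_neg t)
      have h2 := h1.exp
      have h3 : HasDerivAt (fun x : ℝ => (1:ℝ) - Real.exp (-x)) (0 - Real.exp (-t) * -1) t :=
        (hasDerivAt_const t (1:ℝ)).sub h2
      convert h3 using 1; ring
    exact hu.div hv (ne_of_gt (hvne t ht0))
  apply strictMonoOn_of_deriv_pos (convex_Ioi 0)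
  · intro t ht
    exact (hderiv t ht).continuousAt.continuousWithinAt
  · intro t ht
    rw [interior_Ioi] at ht
    rw [(hderiv t ht).deriv]
    have ht0 : (0:ℝ) < t := ht
    have h1 := hvne t ht0
    have h2 := key t ht0
    have ppos := Real.exp_pos (-a * t)
    have qpos := Real.exp_pos (-t)
    apply div_pos _ (by positivity)
    have h2m := mul_lt_mul_of_pos_right h2 (mul_pos ppos qpos)
    have eAq : Real.exp (a * t) * (Real.exp (-a * t) * Real.exp (-t)) = Real.exp (-t) := by
      rw [← mul_assoc, ← Real.exp_add]; simp
    have eEp : a * (Real.exp t * (Real.exp (-a * t) * Real.exp (-t))) = a * Real.exp (-a * t) := by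
      rw [show Real.exp t * (Real.exp (-a * t) * Real.exp (-t)) = Real.exp (-a*t) * (Real.exp t * Real.exp (-t)) by ring, ← Real.exp_add]
      simp
    nlinarith [h2m, eAq, eEp]
end

section
/- For every a in (0,1), the function f_a(x) = ψ(x+a) - ψ(x) - a/x is strictly completely monotonic on (0, ∞), i.e., (-1)ⁿ f_a⁽ⁿ⁾(x) > 0 for all x > 0 and all nonnegative integers n. -/
noncomputable def digamma : ℝ → ℝ := deriv (fun x => Real.log (Real.Gamma x))

open Real Set Filter Topology Function Nat

section Aux

/-- log ∘ Gamma, written as a lambda. -/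
private noncomputable def lG : ℝ → ℝ := fun t => Real.log (Real.Gamma t)

private lemma lG_diff {y : ℝ} (hy : 0 < y) : DifferentiableAt ℝ lG y :=
  (Real.differentiableAt_Gamma fun m =>
    ((lt_of_le_of_lt (neg_nonpos.2 (Nat.cast_nonneg m)) hy).ne')).log
    (Real.Gamma_pos_of_pos hy).ne'

private lemma lG_rec {y : ℝ} (hy : 0 < y) : lG (y + 1) = lG y + Real.log y := by
  simp only [lG]
  rw [Real.Gamma_add_one hy.ne', Real.log_mul hy.ne' (Real.Gamma_pos_of_pos hy).ne', add_comm]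

private lemma lG_convex : ConvexOn ℝ (Ioi 0) lG := by
  exact Real.convexOn_log_Gamma

lemma digamma_rec {x : ℝ} (hx : 0 < x) : digamma (x + 1) = digamma x + 1 / x := by
  show deriv lG (x + 1) = deriv lG x + 1 / x
  rw [← deriv_comp_add_const, one_div, ← Real.deriv_log,
    ← deriv_add (lG_diff hx) (Real.differentiableAt_log hx.ne')]
  apply Filter.EventuallyEq.deriv_eq
  filter_upwards [eventually_gt_nhds hx] using fun y hy => lG_rec hy

lemma digamma_mono {x y : ℝ} (hx : 0 < x) (hxy : x ≤ y) : digamma x ≤ digamma y := by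
  rcases hxy.eq_or_lt with rfl | h
  · exact le_rfl
  show deriv lG x ≤ deriv lG y
  exact (lG_convex.deriv_le_slope (mem_Ioi.2 hx) (mem_Ioi.2 (hx.trans h)) h
    (lG_diff hx)).trans (lG_convex.slope_le_deriv (mem_Ioi.2 hx) (mem_Ioi.2 (hx.trans h)) h
    (lG_diff (hx.trans h)))

/-- The elementary building block: `H a n` is the `n`-th derivative of
`x ↦ (1-a)/x - 1/(x+a) + a/(x+1)`. -/
noncomputable def Haux (a : ℝ) (n : ℕ) (x : ℝ) : ℝ :=
  (-1) ^ n * (n ! : ℝ) *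
    ((1 - a) * (x ^ (n + 1))⁻¹ - ((x + a) ^ (n + 1))⁻¹ + a * ((x + 1) ^ (n + 1))⁻¹)

/-- Target function. -/
noncomputable def Faux (a : ℝ) : ℝ → ℝ := fun y : ℝ => digamma (y + a) - digamma y - a / y

lemma hasDerivAt_invpow {c x : ℝ} (hc : 0 < x + c) (m : ℕ) :
    HasDerivAt (fun y : ℝ => ((y + c) ^ (m + 1))⁻¹)
      (-(m + 1) * ((x + c) ^ (m + 2))⁻¹) x := by
  have h1 : HasDerivAt (fun y : ℝ => (y + c) ^ (m + 1)) ((m + 1) * (x + c) ^ m) x := by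
    simpa using ((hasDerivAt_id x).add_const c).fun_pow (m + 1)
  have h2 := h1.inv (pow_ne_zero _ hc.ne')
  refine h2.congr_deriv ?_
  have hne : x + c ≠ 0 := hc.ne'
  field_simp
  ring

lemma hasDerivAt_Haux {a x : ℝ} (hx : 0 < x) (ha : 0 < a) (n : ℕ) :
    HasDerivAt (Haux a n) (Haux a (n + 1) x) x := by
  have h0 : HasDerivAt (fun y : ℝ => (y ^ (n + 1))⁻¹) (-(n + 1) * (x ^ (n + 2))⁻¹) x := by
    have := hasDerivAt_invpow (c := 0) (by simpa using hx) n
    simpa using this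
  have hA := hasDerivAt_invpow (c := a) (x := x) (by linarith) n
  have h1 := hasDerivAt_invpow (c := 1) (x := x) (by linarith) n
  have hcomb := (((h0.const_mul (1 - a)).sub hA).add (h1.const_mul a)).const_mul
    ((-1 : ℝ) ^ n * (n ! : ℝ))
  refine hcomb.congr_deriv (Eq.symm ?_)
  show (-1:ℝ) ^ (n+1) * ((n+1)! : ℝ) * _ = _
  rw [Nat.factorial_succ]
  push_cast
  ring

lemma Haux_key_ineq {a x : ℝ} (ha : a ∈ Set.Ioo (0:ℝ) 1) (hx : 0 < x) (n : ℕ) :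
    ((x + a) ^ (n + 1))⁻¹ < (1 - a) * (x ^ (n + 1))⁻¹ + a * ((x + 1) ^ (n + 1))⁻¹ := by
  have ha0 := ha.1
  have ha1 := ha.2
  have hcvx := strictConvexOn_zpow (m := -((n:ℤ) + 1)) (by omega) (by omega)
  have h := hcvx.2 (mem_Ioi.2 hx) (mem_Ioi.2 (by linarith : (0:ℝ) < x + 1))
    (ne_of_lt (by linarith))
    (by linarith [ha.2] : (0:ℝ) < 1 - a) ha.1 (by ring)
  dsimp only at h
  have e : (1 - a) • x + a • (x + 1) = x + a := by simp only [smul_eq_mul]; ring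
  rw [e] at h
  have ez : ∀ t : ℝ, 0 < t → t ^ (-((n:ℤ) + 1)) = (t ^ (n + 1))⁻¹ := by
    intro t ht
    rw [zpow_neg]
    norm_cast
  rw [ez _ (by linarith), ez _ hx, ez _ (by linarith)] at h
  simpa [smul_eq_mul] using h

lemma neg_one_pow_mul_Haux (a : ℝ) (n : ℕ) (x : ℝ) :
    (-1:ℝ) ^ n * Haux a n x =
      (n ! : ℝ) * ((1 - a) * (x ^ (n + 1))⁻¹ - ((x + a) ^ (n + 1))⁻¹
        + a * ((x + 1) ^ (n + 1))⁻¹) := by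
  have : (-1:ℝ) ^ n * (-1:ℝ) ^ n = 1 := by
    rw [← mul_pow]; norm_num
  simp only [Haux]
  rw [← mul_assoc, ← mul_assoc, this, one_mul]

lemma Haux_pos {a x : ℝ} (ha : a ∈ Set.Ioo (0:ℝ) 1) (hx : 0 < x) (n : ℕ) :
    0 < (-1:ℝ) ^ n * Haux a n x := by
  rw [neg_one_pow_mul_Haux]
  have h := Haux_key_ineq ha hx n
  have : (0:ℝ) < (n ! : ℝ) := by positivity
  nlinarith [h, this]

lemma summable_invpow {c : ℝ} (hc : 0 < c) {m : ℕ} (hm : 2 ≤ m) :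
    Summable (fun k : ℕ => ((c + (k:ℝ)) ^ m)⁻¹) := by
  rw [← summable_nat_add_iff 1]
  have hs : Summable (fun k : ℕ => (((k:ℝ) + 1) ^ 2)⁻¹) := by
    have := (summable_nat_add_iff (f := fun n : ℕ => 1 / (n:ℝ) ^ 2) 1).2
      (summable_one_div_nat_pow.2 one_lt_two)
    simpa [one_div] using this
  apply Summable.of_nonneg_of_le (fun k => by positivity) (fun k => ?_) hs
  have h1 : ((k:ℝ) + 1) ^ 2 ≤ ((k:ℝ) + 1) ^ m :=
    pow_le_pow_right₀ (by linarith [Nat.cast_nonneg (α := ℝ) k]) hm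
  have h2 : ((k:ℝ) + 1) ^ m ≤ (c + (↑(k + 1):ℝ)) ^ m := by
    apply pow_le_pow_left₀ (by positivity)
    push_cast
    linarith
  have hpos : (0:ℝ) < ((k:ℝ) + 1) ^ 2 := by positivity
  exact inv_anti₀ hpos (h1.trans h2)

lemma abs_Haux_le {a : ℝ} (ha : a ∈ Set.Ioo (0:ℝ) 1) (n : ℕ) {c t : ℝ}
    (hc : 0 < c) (hct : c ≤ t) :
    |Haux a n t| ≤ 2 * (n ! : ℝ) * (c ^ (n + 1))⁻¹ := by
  have ht : 0 < t := hc.trans_le hct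
  set K := (c ^ (n + 1))⁻¹ with hK
  have hKpos : 0 < K := by positivity
  have e0 : (t ^ (n + 1))⁻¹ ≤ K := by
    apply inv_anti₀ (by positivity)
    exact pow_le_pow_left₀ hc.le hct _
  have ea : ((t + a) ^ (n + 1))⁻¹ ≤ K := by
    apply inv_anti₀ (by positivity)
    exact pow_le_pow_left₀ hc.le (by linarith [ha.1]) _
  have e1 : ((t + 1) ^ (n + 1))⁻¹ ≤ K := by
    apply inv_anti₀ (by positivity)
    exact pow_le_pow_left₀ hc.le (by linarith) _
  have habs : |(1 - a) * (t ^ (n + 1))⁻¹ - ((t + a) ^ (n + 1))⁻¹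
      + a * ((t + 1) ^ (n + 1))⁻¹| ≤ 2 * K := by
    have t0 : (0:ℝ) ≤ (t ^ (n + 1))⁻¹ := by positivity
    have ta : (0:ℝ) ≤ ((t + a) ^ (n + 1))⁻¹ :=
      inv_nonneg.2 (pow_nonneg (by linarith [ha.1]) _)
    have t1 : (0:ℝ) ≤ ((t + 1) ^ (n + 1))⁻¹ := by positivity
    have ha0 := ha.1
    have ha1 := ha.2
    rw [abs_le]
    constructor <;> nlinarith
  calc |Haux a n t| = (n ! : ℝ) * |(1 - a) * (t ^ (n + 1))⁻¹ - ((t + a) ^ (n + 1))⁻¹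
      + a * ((t + 1) ^ (n + 1))⁻¹| := by
        simp only [Haux, abs_mul, abs_pow, abs_neg, abs_one, one_pow, one_mul, Nat.abs_cast]
    _ ≤ (n ! : ℝ) * (2 * K) := by
        exact mul_le_mul_of_nonneg_left habs (by positivity)
    _ = 2 * (n ! : ℝ) * K := by ring

end Aux

section Telescope

variable {a : ℝ}

lemma Faux_step (ha : a ∈ Set.Ioo (0:ℝ) 1) {x : ℝ} (hx : 0 < x) :
    Faux a x = Haux a 0 x + Faux a (x + 1) := by
  have h1 := digamma_rec hx
  have h2 := digamma_rec (show (0:ℝ) < x + a by linarith [ha.1])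
  simp only [Faux, Haux, pow_one, pow_zero, Nat.factorial_zero, Nat.cast_one, one_mul]
  rw [show x + 1 + a = (x + a) + 1 by ring, h1, h2]
  have hx0 : x ≠ 0 := hx.ne'
  have hxa : x + a ≠ 0 := ne_of_gt (by linarith [ha.1])
  have hx1 : x + 1 ≠ 0 := by positivity
  field_simp
  ring

lemma Faux_partial_sum (ha : a ∈ Set.Ioo (0:ℝ) 1) {x : ℝ} (hx : 0 < x) (N : ℕ) :
    ∑ k ∈ Finset.range N, Haux a 0 (x + k) = Faux a x - Faux a (x + N) := by
  induction N with
  | zero => simp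
  | succ N ih =>
    rw [Finset.sum_range_succ, ih]
    have hxN : (0:ℝ) < x + N := add_pos_of_pos_of_nonneg hx (Nat.cast_nonneg N)
    have := Faux_step ha hxN
    push_cast
    rw [show x + ((N:ℝ) + 1) = x + (N:ℝ) + 1 by ring]
    linarith [this]

lemma Faux_bounds (ha : a ∈ Set.Ioo (0:ℝ) 1) {x : ℝ} (hx : 0 < x) :
    -(a / x) ≤ Faux a x ∧ Faux a x ≤ 1 / x := by
  have m1 : digamma x ≤ digamma (x + a) := digamma_mono hx (by linarith [ha.1])
  have m2 : digamma (x + a) ≤ digamma (x + 1) :=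
    digamma_mono (by linarith [ha.1]) (by linarith [ha.2])
  rw [digamma_rec hx] at m2
  have hax : 0 ≤ a / x := div_nonneg ha.1.le hx.le
  constructor <;> simp only [Faux] <;> linarith

lemma Faux_tendsto (ha : a ∈ Set.Ioo (0:ℝ) 1) {x : ℝ} (hx : 0 < x) :
    Tendsto (fun N : ℕ => Faux a (x + N)) atTop (𝓝 0) := by
  have hlim : Tendsto (fun N : ℕ => (x + (N:ℝ))⁻¹) atTop (𝓝 0) := by
    apply Tendsto.inv_tendsto_atTop
    exact tendsto_atTop_add_const_left _ x tendsto_natCast_atTop_atTop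
  have hlo : Tendsto (fun N : ℕ => -(a * (x + (N:ℝ))⁻¹)) atTop (𝓝 0) := by
    have := (hlim.const_mul a).neg
    simpa using this
  apply tendsto_of_tendsto_of_tendsto_of_le_of_le hlo hlim
  · intro N
    have := (Faux_bounds ha (add_pos_of_pos_of_nonneg hx (Nat.cast_nonneg N))).1
    rw [div_eq_mul_inv] at this
    exact this
  · intro N
    have := (Faux_bounds ha (add_pos_of_pos_of_nonneg hx (Nat.cast_nonneg N))).2
    rw [one_div] at this
    exact this

lemma hasSum_Faux (ha : a ∈ Set.Ioo (0:ℝ) 1) {x : ℝ} (hx : 0 < x) :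
    HasSum (fun k : ℕ => Haux a 0 (x + k)) (Faux a x) := by
  rw [hasSum_iff_tendsto_nat_of_nonneg]
  · have : Tendsto (fun N : ℕ => Faux a x - Faux a (x + N)) atTop (𝓝 (Faux a x - 0)) :=
      (tendsto_const_nhds).sub (Faux_tendsto ha hx)
    rw [sub_zero] at this
    apply this.congr'
    filter_upwards with N using (Faux_partial_sum ha hx N).symm
  · intro k
    have := Haux_pos ha (add_pos_of_pos_of_nonneg hx (Nat.cast_nonneg k)) 0
    simpa using this.le

lemma summable_Haux (ha : a ∈ Set.Ioo (0:ℝ) 1) (n : ℕ) {x : ℝ} (hx : 0 < x) :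
    Summable (fun k : ℕ => Haux a n (x + k)) := by
  cases n with
  | zero => exact (hasSum_Faux ha hx).summable
  | succ n =>
    apply Summable.of_norm_bounded
      (g := fun k : ℕ => 2 * ((n + 1)! : ℝ) * ((x + (k:ℝ)) ^ (n + 1 + 1))⁻¹)
    · exact ((summable_invpow hx (by omega)).mul_left _)
    · intro k
      rw [Real.norm_eq_abs]
      exact abs_Haux_le ha (n + 1) (add_pos_of_pos_of_nonneg hx (Nat.cast_nonneg k)) le_rfl

lemma deriv_iter_Faux (ha : a ∈ Set.Ioo (0:ℝ) 1) (n : ℕ) :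
    ∀ x : ℝ, 0 < x → deriv^[n] (Faux a) x = ∑' k : ℕ, Haux a n (x + k) := by
  induction n with
  | zero =>
    intro x hx
    simp only [Function.iterate_zero, id_eq]
    exact (hasSum_Faux ha hx).tsum_eq.symm
  | succ n ih =>
    intro x hx
    rw [Function.iterate_succ_apply']
    have heq : deriv^[n] (Faux a) =ᶠ[𝓝 x] fun y => ∑' k : ℕ, Haux a n (y + k) := by
      filter_upwards [isOpen_Ioi.mem_nhds (show x ∈ Ioi (0:ℝ) from hx)] with y hy
      exact ih y hy
    rw [heq.deriv_eq]
    have key : HasDerivAt (fun y : ℝ => ∑' k : ℕ, Haux a n (y + k))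
        (∑' k : ℕ, Haux a (n + 1) (x + k)) x := by
      apply hasDerivAt_tsum_of_isPreconnected
        (g := fun (k : ℕ) (y : ℝ) => Haux a n (y + (k:ℝ)))
        (g' := fun (k : ℕ) (y : ℝ) => Haux a (n + 1) (y + (k:ℝ)))
        (u := fun k : ℕ => 2 * ((n + 1)! : ℝ) * ((x / 2 + (k:ℝ)) ^ (n + 1 + 1))⁻¹)
        (t := Ioi (x / 2)) (y₀ := x)
      · exact (summable_invpow (by positivity) (by omega)).mul_left _
      · exact isOpen_Ioi
      · exact isPreconnected_Ioi
      · intro k y hy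
        have hy0 : (0:ℝ) < y + k := by
          have h' : x / 2 < y := hy
          have := Nat.cast_nonneg (α := ℝ) k
          linarith
        exact (hasDerivAt_Haux hy0 ha.1 n).comp_add_const y k
      · intro k y hy
        rw [Real.norm_eq_abs]
        have h1 : x / 2 + (k:ℝ) ≤ y + k := by
          have : x / 2 < y := hy
          linarith
        exact abs_Haux_le ha (n + 1) (by have := Nat.cast_nonneg (α := ℝ) k; linarith) h1
      · exact mem_Ioi.2 (half_lt_self hx)
      · exact summable_Haux ha n hx
      · exact mem_Ioi.2 (half_lt_self hx)
    exact key.deriv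

end Telescope

theorem stmt_8 (a : ℝ) (ha : a ∈ Set.Ioo (0:ℝ) 1) (n : ℕ) (x : ℝ) (hx : 0 < x) :
    0 < (-1) ^ n *
      deriv^[n] (fun y : ℝ => digamma (y + a) - digamma y - a / y) x := by
  have hrep := deriv_iter_Faux ha n x hx
  show (0:ℝ) < (-1) ^ n * deriv^[n] (Faux a) x
  rw [hrep, ← tsum_mul_left]
  apply Summable.tsum_pos ((summable_Haux ha n hx).mul_left _)
    (fun k => (Haux_pos ha (add_pos_of_pos_of_nonneg hx (Nat.cast_nonneg k)) n).le) 0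
  exact Haux_pos ha (add_pos_of_pos_of_nonneg hx (Nat.cast_nonneg 0)) n
end

section
/- For every a in (0,1) and every even nonnegative integer k, the function f_{a,k}(x) = ψ⁽ᵏ⁾(x+a) - ψ⁽ᵏ⁾(x) - a·k!/x^{k+1} satisfies (-1)ⁿ f_{a,k}⁽ⁿ⁾(x) > 0 for all x > 0 and all nonnegative integers n (strict complete monotonicity on (0, ∞)). -/
noncomputable def polygamma (n : ℕ) : ℝ → ℝ := deriv^[n] digamma

open Filter Set Topology Finset

lemma summable_inv_pow_add (c : ℝ) (hc : 0 < c) {e : ℕ} (he : 2 ≤ e) :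
    Summable (fun m : ℕ => ((c + m) ^ e)⁻¹) := by
  rw [← summable_nat_add_iff 1]
  have hmaj : Summable (fun m : ℕ => (((m : ℝ) + 1) ^ e)⁻¹) := by
    have h1 := (Real.summable_one_div_nat_pow (p := e)).2 (by omega)
    rw [← summable_nat_add_iff 1] at h1
    simpa [one_div] using h1
  refine Summable.of_nonneg_of_le (fun m => by positivity) (fun m => ?_) hmaj
  have h2 : (0:ℝ) < (m:ℝ) + 1 := by positivity
  have h3 : ((m:ℝ) + 1) ≤ c + (m + 1 : ℕ) := by push_cast; linarith
  exact inv_anti₀ (by positivity) (pow_le_pow_left₀ h2.le h3 e)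

-- derivative helper
lemma hasDerivAt_inv_pow_shift (c : ℝ) (i : ℕ) {y : ℝ} (h : 0 < y + c) :
    HasDerivAt (fun z : ℝ => ((z + c) ^ (i+1))⁻¹) (-((i:ℝ)+1) * ((y + c) ^ (i+2))⁻¹) y := by
  have h0 : y + c ≠ 0 := h.ne'
  have h1 : HasDerivAt (fun z : ℝ => (z + c) ^ (i+1)) (((i:ℝ)+1) * (y+c)^i) y := by
    have := ((hasDerivAt_id y).add_const c).fun_pow (i+1)
    simpa using this
  have h2 := h1.inv (pow_ne_zero _ h0)
  refine h2.congr_deriv ?_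
  field_simp
  ring

noncomputable def QS (j : ℕ) (y : ℝ) : ℝ := ∑' m : ℕ, ((y + m) ^ j)⁻¹
noncomputable def TS (a : ℝ) (j : ℕ) (y : ℝ) : ℝ :=
  ∑' m : ℕ, (((y + m) ^ j)⁻¹ - ((y + a + m) ^ j)⁻¹)
noncomputable def FA (a : ℝ) (j : ℕ) (y : ℝ) : ℝ := TS a j y - a * (y ^ j)⁻¹

lemma TS_term_nonneg {a : ℝ} (ha : 0 ≤ a) (j : ℕ) {y : ℝ} (hy : 0 < y) (m : ℕ) :
    0 ≤ ((y + m) ^ j)⁻¹ - ((y + a + m) ^ j)⁻¹ := by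
  have h1 : (0:ℝ) < y + m := by positivity
  have h2 : y + m ≤ y + a + m := by linarith
  have := pow_le_pow_left₀ h1.le h2 j
  have h3 : (0:ℝ) < (y+m)^j := by positivity
  have := inv_anti₀ h3 this
  linarith

lemma summable_TS {a : ℝ} (ha : 0 < a) {j : ℕ} (hj : 1 ≤ j) {y : ℝ} (hy : 0 < y) :
    Summable (fun m : ℕ => ((y + m) ^ j)⁻¹ - ((y + a + m) ^ j)⁻¹) := by
  rcases eq_or_lt_of_le hj with h1 | h2
  · -- j = 1
    refine Summable.of_nonneg_of_le (TS_term_nonneg ha.le j hy) (fun m => ?_)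
      ((summable_inv_pow_add y hy (le_refl 2)).mul_left a)
    subst h1
    have h1 : (0:ℝ) < y + m := by positivity
    have h2 : (0:ℝ) < y + a + m := by positivity
    have key : ((y + m) ^ 1)⁻¹ - ((y + a + m) ^ 1)⁻¹ = a / ((y+m)*(y+a+m)) := by
      field_simp
      ring
    rw [key, ← div_eq_mul_inv]
    apply div_le_div_of_nonneg_left ha.le (by positivity)
    nlinarith
  · refine Summable.of_nonneg_of_le (TS_term_nonneg ha.le j hy) (fun m => ?_)
      (summable_inv_pow_add y hy h2)
    have h1 : (0:ℝ) < y + a + m := by positivity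
    have : (0:ℝ) < ((y + a + m) ^ j)⁻¹ := by positivity
    linarith

lemma hasDerivAt_TS {a : ℝ} (ha : 0 < a) {j : ℕ} (hj : 1 ≤ j) {x : ℝ} (hx : 0 < x) :
    HasDerivAt (TS a j) (-(j:ℝ) * TS a (j+1) x) x := by
  obtain ⟨i, rfl⟩ : ∃ i, j = i + 1 := ⟨j - 1, by omega⟩
  set t : Set ℝ := Ioo (x/2) (x+1) with ht
  have hxt : x ∈ t := ⟨by linarith, by linarith⟩
  have key : HasDerivAt (fun z : ℝ => ∑' m : ℕ, (((z + m) ^ (i+1))⁻¹ - ((z + a + m) ^ (i+1))⁻¹))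
      (∑' m : ℕ, (-((i:ℝ)+1) * (((x + m) ^ (i+2))⁻¹ - ((x + a + m) ^ (i+2))⁻¹))) x := by
    apply hasDerivAt_tsum_of_isPreconnected
      (u := fun m : ℕ => ((i:ℝ)+1) * ((x/2 + m) ^ (i+2))⁻¹)
      (g := fun (m : ℕ) (z : ℝ) => ((z + m) ^ (i+1))⁻¹ - ((z + a + m) ^ (i+1))⁻¹)
      (g' := fun (m : ℕ) (z : ℝ) => -((i:ℝ)+1) * (((z + m) ^ (i+2))⁻¹ - ((z + a + m) ^ (i+2))⁻¹))
      (((summable_inv_pow_add (x/2) (by positivity) (by omega))).mul_left _)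
      isOpen_Ioo (isPreconnected_Ioo) ?_ ?_ hxt (summable_TS ha (by omega) hx) hxt
    · intro m y hy
      simp only [ht, Set.mem_Ioo] at hy
      obtain ⟨hyl, hyr⟩ := hy
      have hy0 : 0 < y := lt_trans (by positivity) hyl
      have hy1 : 0 < y + (m:ℝ) := by positivity
      have hy2 : 0 < y + (a + (m:ℝ)) := by positivity
      have h1 := hasDerivAt_inv_pow_shift (m:ℝ) i hy1
      have h2 := hasDerivAt_inv_pow_shift (a + (m:ℝ)) i hy2
      have h3 := h1.fun_sub h2
      simp only [← add_assoc] at h3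
      refine h3.congr_deriv ?_
      ring
    · intro m y hy
      simp only [ht, Set.mem_Ioo] at hy
      obtain ⟨hyl, hyr⟩ := hy
      have hy0 : 0 < y := lt_trans (by positivity) hyl
      have hy1 : (0:ℝ) < y + m := by positivity
      have hy2 : (0:ℝ) < x/2 + m := by positivity
      have hb : ((y + m) ^ (i+2))⁻¹ ≤ ((x/2 + m) ^ (i+2))⁻¹ := by
        apply inv_anti₀ (by positivity)
        apply pow_le_pow_left₀ hy2.le (by linarith)
      have hnn := TS_term_nonneg ha.le (i+2) hy0 m
      have hA : (0:ℝ) < ((y + a + m) ^ (i+2))⁻¹ := by positivity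
      rw [norm_mul, norm_neg, Real.norm_eq_abs, Real.norm_eq_abs]
      rw [abs_of_nonneg (by positivity : (0:ℝ) ≤ (i:ℝ)+1), abs_of_nonneg hnn]
      apply mul_le_mul_of_nonneg_left _ (by positivity)
      linarith
  unfold TS
  convert key using 1
  rw [tsum_mul_left]
  norm_num

lemma hasDerivAt_QS {j : ℕ} (hj : 2 ≤ j) {x : ℝ} (hx : 0 < x) :
    HasDerivAt (QS j) (-(j:ℝ) * QS (j+1) x) x := by
  obtain ⟨i, rfl⟩ : ∃ i, j = i + 2 := ⟨j - 2, by omega⟩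
  set t : Set ℝ := Ioo (x/2) (x+1) with ht
  have hxt : x ∈ t := ⟨by linarith, by linarith⟩
  have key : HasDerivAt (fun z : ℝ => ∑' m : ℕ, ((z + m) ^ (i+2))⁻¹)
      (∑' m : ℕ, (-((i:ℝ)+2) * ((x + m) ^ (i+3))⁻¹)) x := by
    apply hasDerivAt_tsum_of_isPreconnected
      (u := fun m : ℕ => ((i:ℝ)+2) * ((x/2 + m) ^ (i+3))⁻¹)
      (g := fun (m : ℕ) (z : ℝ) => ((z + m) ^ (i+2))⁻¹)
      (g' := fun (m : ℕ) (z : ℝ) => -((i:ℝ)+2) * ((z + m) ^ (i+3))⁻¹)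
      (((summable_inv_pow_add (x/2) (by positivity) (by omega))).mul_left _)
      isOpen_Ioo (isPreconnected_Ioo) ?_ ?_ hxt (summable_inv_pow_add x hx (by omega)) hxt
    · intro m y hy
      simp only [ht, Set.mem_Ioo] at hy
      have hy0 : 0 < y := lt_trans (by positivity) hy.1
      have hy1 : 0 < y + (m:ℝ) := by positivity
      have h1 := hasDerivAt_inv_pow_shift (m:ℝ) (i+1) hy1
      refine h1.congr_deriv ?_
      push_cast; ring
    · intro m y hy
      simp only [ht, Set.mem_Ioo] at hy
      have hy2 : (0:ℝ) < x/2 + m := by positivity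
      have hy1 : (0:ℝ) < y + m := by nlinarith [hy.1]
      have hb : ((y + m) ^ (i+3))⁻¹ ≤ ((x/2 + m) ^ (i+3))⁻¹ := by
        apply inv_anti₀ (by positivity)
        apply pow_le_pow_left₀ hy2.le (by nlinarith [hy.1])
      rw [norm_mul, norm_neg, Real.norm_eq_abs, Real.norm_eq_abs]
      rw [abs_of_nonneg (by positivity : (0:ℝ) ≤ (i:ℝ)+2), abs_of_nonneg (by positivity)]
      exact mul_le_mul_of_nonneg_left hb (by positivity)
  unfold QS
  convert key using 1
  rw [tsum_mul_left]
  norm_num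

noncomputable def WS (y : ℝ) : ℝ := ∑' m : ℕ, (((m:ℝ) + 1)⁻¹ - (y + m + 1)⁻¹)

lemma summable_sq_shift : Summable (fun m : ℕ => ((((m:ℝ)+1)) ^ 2)⁻¹) :=
  (summable_inv_pow_add 1 one_pos le_rfl).congr fun m => by rw [add_comm]

lemma WS_bound {m : ℕ} {y : ℝ} (hy0 : 0 < y) {M : ℝ} (hyM : y ≤ M) :
    ‖((m:ℝ) + 1)⁻¹ - (y + m + 1)⁻¹‖ ≤ M * (((m:ℝ)+1) ^ 2)⁻¹ := by
  have h1 : (0:ℝ) < (m:ℝ) + 1 := by positivity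
  have h2 : (0:ℝ) < y + m + 1 := by positivity
  have key : ((m:ℝ) + 1)⁻¹ - (y + m + 1)⁻¹ = y / (((m:ℝ)+1) * (y + m + 1)) := by
    field_simp
    ring
  rw [Real.norm_eq_abs, key, abs_of_nonneg (by positivity)]
  rw [div_le_iff₀ (by positivity)]
  have : (((m:ℝ)+1) ^ 2) ≤ ((m:ℝ)+1) * (y+m+1) := by nlinarith
  have h3 : (0:ℝ) < (((m:ℝ)+1) ^ 2) := by positivity
  calc y = (y * (((m:ℝ)+1)^2)) * (((m:ℝ)+1)^2)⁻¹ := by field_simp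
  _ ≤ (M * (((m:ℝ)+1) * (y+m+1))) * (((m:ℝ)+1)^2)⁻¹ := by
      apply mul_le_mul_of_nonneg_right _ (by positivity)
      apply mul_le_mul hyM this (by positivity) (by linarith)
  _ = M * (((m:ℝ)+1) ^ 2)⁻¹ * (((m:ℝ)+1) * (y + m + 1)) := by ring

lemma summable_WS {y : ℝ} (hy : 0 < y) :
    Summable (fun m : ℕ => ((m:ℝ) + 1)⁻¹ - (y + m + 1)⁻¹) := by
  refine Summable.of_norm ?_
  refine Summable.of_nonneg_of_le (fun m => norm_nonneg _)
    (fun m => WS_bound hy le_rfl) (summable_sq_shift.mul_left y)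

lemma digamma_eq {x : ℝ} (hx : 0 < x) :
    digamma x = -Real.eulerMascheroniConstant + WS x - x⁻¹ := by
  set s : Set ℝ := Ioo 0 (x+1) with hs
  have hxs : x ∈ s := ⟨hx, by linarith⟩
  -- the approximating functions and their derivatives
  set L : ℕ → ℝ → ℝ := fun n y =>
    y * Real.log n + Real.log (n.factorial : ℝ) - ∑ m ∈ Finset.range (n+1), Real.log (y + m) with hL
  set D : ℕ → ℝ → ℝ := fun n y =>
    Real.log n - ∑ m ∈ Finset.range (n+1), (y + m)⁻¹ with hDdef
  have hharm : ∀ n : ℕ, ((harmonic n : ℚ) : ℝ) = ∑ m ∈ Finset.range n, ((m:ℝ)+1)⁻¹ := by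
    intro n
    rw [harmonic]
    push_cast
    rfl
  have hD : ∀ (n : ℕ) (y : ℝ), 0 < y → D n y =
      (Real.log n - ((harmonic n : ℚ) : ℝ))
        + (∑ m ∈ Finset.range n, (((m:ℝ)+1)⁻¹ - (y+m+1)⁻¹)) - y⁻¹ := by
    intro n y hy
    rw [hDdef, hharm]
    simp only
    rw [Finset.sum_range_succ' (fun m => (y + (m:ℝ))⁻¹) n, Finset.sum_sub_distrib]
    have hcongr : ∑ m ∈ Finset.range n, (y + ((m+1:ℕ):ℝ))⁻¹
        = ∑ m ∈ Finset.range n, (y + (m:ℝ) + 1)⁻¹ := by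
      apply Finset.sum_congr rfl
      intro m _
      push_cast
      ring_nf
    rw [hcongr]
    push_cast
    ring
  -- uniform convergence of derivatives
  have hA : Tendsto (fun n : ℕ => Real.log n - ((harmonic n : ℚ):ℝ)) atTop
      (𝓝 (-Real.eulerMascheroniConstant)) := by
    have := Real.tendsto_harmonic_sub_log.neg
    simpa [neg_sub] using this
  have hTU : TendstoUniformlyOn D (fun y => -Real.eulerMascheroniConstant + WS y - y⁻¹) atTop s := by
    have TUB := tendstoUniformlyOn_tsum_nat (f := fun (m:ℕ) (y:ℝ) => ((m:ℝ) + 1)⁻¹ - (y + m + 1)⁻¹)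
      (summable_sq_shift.mul_left (x+1)) (s := s) ?_
    · have TUA := hA.tendstoUniformlyOn_const s
      have hC : TendstoUniformlyOn (fun (_:ℕ) (y:ℝ) => y⁻¹) (fun y => y⁻¹) atTop s := by
        rw [Metric.tendstoUniformlyOn_iff]
        intro ε hε
        filter_upwards with n y hy
        simpa using hε
      have := (TUA.add TUB).sub hC
      apply this.congr
      filter_upwards with n y hy
      exact (hD n y hy.1).symm
    · intro m y hy
      exact WS_bound hy.1 (le_of_lt hy.2)
  -- each approximant has the required derivative
  have hf : ∀ (n : ℕ), ∀ y ∈ s, HasDerivAt (L n) (D n y) y := by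
    intro n y hy
    have h1 : HasDerivAt (fun y : ℝ => y * Real.log n + Real.log (n.factorial : ℝ)) (Real.log n) y :=
      (hasDerivAt_mul_const _).add_const _
    have h2 : HasDerivAt (fun y : ℝ => ∑ m ∈ Finset.range (n+1), Real.log (y + m))
        (∑ m ∈ Finset.range (n+1), (y + m)⁻¹) y := by
      apply HasDerivAt.fun_sum
      intro m _
      have hym : 0 < y + (m:ℝ) := by have := hy.1; positivity
      have := (Real.hasDerivAt_log hym.ne').comp y ((hasDerivAt_id y).add_const (m:ℝ))
      simp at this
      exact this
    simpa using h1.fun_sub h2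
  -- pointwise convergence to log ∘ Gamma
  have hfg : ∀ y ∈ s, Tendsto (fun n => L n y) atTop (𝓝 (Real.log (Real.Gamma y))) := by
    intro y hy
    have hy0 : 0 < y := hy.1
    have hG : 0 < Real.Gamma y := Real.Gamma_pos_of_pos hy0
    have h0 : Tendsto (fun n => Real.log (Real.GammaSeq y n)) atTop
        (𝓝 (Real.log (Real.Gamma y))) :=
      ((Real.continuousAt_log hG.ne').tendsto).comp (Real.GammaSeq_tendsto_Gamma y)
    apply h0.congr'
    filter_upwards [eventually_ge_atTop 1] with n hn
    have hn0 : (0:ℝ) < n := by exact_mod_cast hn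
    have hprod : ∀ j ∈ Finset.range (n+1), y + (j:ℝ) ≠ 0 := by
      intro j _
      positivity
    have hprodpos : 0 < ∏ j ∈ Finset.range (n+1), (y + (j:ℝ)) := by
      apply Finset.prod_pos
      intro j _
      positivity
    rw [Real.GammaSeq, Real.log_div (by positivity) hprodpos.ne', Real.log_mul (by positivity)
      (by positivity), Real.log_rpow hn0, Real.log_prod hprod]
  have hder : HasDerivAt (fun y => Real.log (Real.Gamma y))
      (-Real.eulerMascheroniConstant + WS x - x⁻¹) x := by
    apply hasDerivAt_of_tendstoUniformlyOn isOpen_Ioo hTU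
      (Eventually.of_forall hf) hfg hxs
  rw [digamma]
  exact hder.deriv

lemma hasDerivAt_WS {x : ℝ} (hx : 0 < x) :
    HasDerivAt WS (QS 2 x - (x^2)⁻¹) x := by
  set t : Set ℝ := Ioo (x/2) (x+1) with ht
  have hxt : x ∈ t := ⟨by linarith, by linarith⟩
  have key : HasDerivAt (fun z : ℝ => ∑' m : ℕ, (((m:ℝ) + 1)⁻¹ - (z + m + 1)⁻¹))
      (∑' m : ℕ, ((x + m + 1)^2)⁻¹) x := by
    apply hasDerivAt_tsum_of_isPreconnected
      (u := fun m : ℕ => ((x/2 + m) ^ 2)⁻¹)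
      (g := fun (m : ℕ) (z : ℝ) => ((m:ℝ) + 1)⁻¹ - (z + m + 1)⁻¹)
      (g' := fun (m : ℕ) (z : ℝ) => ((z + m + 1) ^ 2)⁻¹)
      (summable_inv_pow_add (x/2) (by positivity) le_rfl)
      isOpen_Ioo (isPreconnected_Ioo) ?_ ?_ hxt (summable_WS hx) hxt
    · intro m y hy
      simp only [ht, Set.mem_Ioo] at hy
      have hy0 : 0 < y := lt_trans (by positivity) hy.1
      have hym : 0 < y + ((m:ℝ) + 1) := by positivity
      have h1 := (hasDerivAt_inv_pow_shift ((m:ℝ)+1) 0 hym).const_sub (((m:ℝ) + 1)⁻¹)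
      simp only [← add_assoc] at h1
      norm_num at h1
      exact h1
    · intro m y hy
      simp only [ht, Set.mem_Ioo] at hy
      have hy2 : (0:ℝ) < x/2 + m := by positivity
      have hb : ((y + m + 1) ^ 2)⁻¹ ≤ ((x/2 + m) ^ 2)⁻¹ := by
        apply inv_anti₀ (by positivity)
        apply pow_le_pow_left₀ hy2.le (by nlinarith [hy.1])
      rw [Real.norm_eq_abs, abs_of_nonneg (by positivity)]
      exact hb
  have hQ : QS 2 x = (x^2)⁻¹ + ∑' m : ℕ, ((x + m + 1)^2)⁻¹ := by
    rw [QS, Summable.tsum_eq_zero_add (summable_inv_pow_add x hx le_rfl)]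
    congr 1
    · norm_num
    · apply tsum_congr
      intro m
      push_cast
      ring_nf
  have h2 : (∑' m : ℕ, ((x + m + 1)^2)⁻¹) = QS 2 x - (x^2)⁻¹ := by rw [hQ]; ring
  rw [h2] at key
  exact key

lemma iter_deriv_congr {f g : ℝ → ℝ} {s : Set ℝ} (hs : IsOpen s) (h : Set.EqOn f g s)
    (n : ℕ) : ∀ {x : ℝ}, x ∈ s → deriv^[n] f x = deriv^[n] g x := by
  induction n with
  | zero => exact fun hx => h hx
  | succ n ih =>
    intro x hx
    rw [Function.iterate_succ_apply', Function.iterate_succ_apply']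
    apply Filter.EventuallyEq.deriv_eq
    filter_upwards [hs.mem_nhds hx] with z hz using ih hz

lemma iter_deriv_const_mul (c : ℝ) (f : ℝ → ℝ) (n : ℕ) :
    deriv^[n] (fun y => c * f y) = fun x => c * deriv^[n] f x := by
  induction n with
  | zero => rfl
  | succ n ih =>
    rw [Function.iterate_succ_apply', ih]
    funext x
    rw [Function.iterate_succ_apply']
    exact deriv_const_mul_field c

lemma digamma_eqOn : Set.EqOn digamma
    (fun y => -Real.eulerMascheroniConstant + WS y - y⁻¹) (Set.Ioi 0) :=
  fun _ hy => digamma_eq hy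

lemma deriv_digamma {x : ℝ} (hx : 0 < x) : deriv digamma x = QS 2 x := by
  have h1 : digamma =ᶠ[𝓝 x] (fun y => -Real.eulerMascheroniConstant + WS y - y⁻¹) := by
    filter_upwards [isOpen_Ioi.mem_nhds (show x ∈ Set.Ioi 0 from hx)] with z hz
      using digamma_eqOn hz
  rw [h1.deriv_eq]
  have h2 : HasDerivAt (fun y : ℝ => -Real.eulerMascheroniConstant + WS y - y⁻¹)
      ((QS 2 x - (x^2)⁻¹) - (-(x^2)⁻¹)) x :=
    ((hasDerivAt_WS hx).const_add _).sub (hasDerivAt_inv hx.ne')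
  have h3 := h2.deriv
  rw [h3]
  ring

lemma polygamma_eq {k : ℕ} {x : ℝ} (hx : 0 < x) :
    polygamma (k+1) x = (-1)^k * ((k+1).factorial : ℝ) * QS (k+2) x := by
  induction k generalizing x with
  | zero =>
    have : polygamma 1 x = deriv digamma x := rfl
    rw [this, deriv_digamma hx]
    norm_num
  | succ k ih =>
    have h0 : polygamma (k+2) x = deriv (polygamma (k+1)) x := by
      rw [polygamma, Function.iterate_succ_apply']
      rfl
    rw [h0]
    have h1 : polygamma (k+1) =ᶠ[𝓝 x]
        (fun y => ((-1)^k * ((k+1).factorial : ℝ)) * QS (k+2) y) := by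
      filter_upwards [isOpen_Ioi.mem_nhds (show x ∈ Set.Ioi 0 from hx)] with z hz
        using ih hz
    rw [h1.deriv_eq, deriv_const_mul_field, (hasDerivAt_QS (by omega) hx).deriv]
    rw [Nat.factorial_succ (k+1)]
    push_cast
    ring

lemma polygamma_diff {a : ℝ} (ha : 0 < a) {k : ℕ} (hk : Even k) {y : ℝ} (hy : 0 < y) :
    polygamma k (y + a) - polygamma k y = (k.factorial : ℝ) * TS a (k+1) y := by
  have hya : 0 < y + a := by linarith
  rcases Nat.eq_zero_or_pos k with hk0 | hkpos
  · subst hk0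
    have h0 : polygamma 0 = digamma := rfl
    rw [h0, digamma_eq hya, digamma_eq hy]
    have hWdiff : WS (y + a) - WS y = ∑' m : ℕ, ((y + m + 1)⁻¹ - (y + a + m + 1)⁻¹) := by
      rw [WS, WS, ← Summable.tsum_sub (summable_WS hya) (summable_WS hy)]
      apply tsum_congr
      intro m
      ring
    have hTS : TS a 1 y = (y⁻¹ - (y + a)⁻¹) + ∑' m : ℕ, ((y + m + 1)⁻¹ - (y + a + m + 1)⁻¹) := by
      rw [TS, Summable.tsum_eq_zero_add (summable_TS ha le_rfl hy)]
      congr 1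
      · norm_num
      · apply tsum_congr
        intro m
        push_cast
        ring_nf
    rw [hTS]
    simp only [Nat.factorial_zero, Nat.cast_one, one_mul]
    rw [← hWdiff]
    ring
  · obtain ⟨i, rfl⟩ : ∃ i, k = i + 1 := ⟨k - 1, by omega⟩
    rw [polygamma_eq hya, polygamma_eq hy]
    have hsign : ((-1:ℝ))^i = -1 := by
      have : Odd i := Nat.not_even_iff_odd.1 (Nat.even_add_one.1 hk)
      exact Odd.neg_one_pow this
    rw [hsign]
    have hQdiff : QS (i+2) y - QS (i+2) (y+a) = TS a (i+2) y := by
      rw [QS, QS, TS, ← Summable.tsum_sub (summable_inv_pow_add y hy (by omega))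
        (summable_inv_pow_add (y+a) hya (by omega))]
    have : (i+1+1) = i+2 := rfl
    rw [this, ← hQdiff]
    ring

lemma hasDerivAt_FA {a : ℝ} (ha : 0 < a) {j : ℕ} (hj : 1 ≤ j) {x : ℝ} (hx : 0 < x) :
    HasDerivAt (FA a j) (-(j:ℝ) * FA a (j+1) x) x := by
  obtain ⟨i, rfl⟩ : ∃ i, j = i + 1 := ⟨j - 1, by omega⟩
  have h1 := hasDerivAt_TS ha hj hx
  have h2 : HasDerivAt (fun y : ℝ => a * (y ^ (i+1))⁻¹)
      (a * (-((i:ℝ)+1) * (x ^ (i+2))⁻¹)) x := by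
    have h0 := hasDerivAt_inv_pow_shift 0 i (by simpa using hx)
    simp only [add_zero] at h0
    exact h0.const_mul a
  have h3 := h1.fun_sub h2
  unfold FA
  refine h3.congr_deriv ?_
  unfold TS
  push_cast
  ring

lemma iter_FA {a : ℝ} (ha : 0 < a) (n : ℕ) :
    ∀ (j : ℕ), 1 ≤ j → ∀ {x : ℝ}, 0 < x →
      deriv^[n] (FA a j) x
        = ((-1:ℝ)^n * ∏ i ∈ Finset.range n, ((j:ℝ) + i)) * FA a (j+n) x := by
  induction n with
  | zero => intro j hj x hx; simp
  | succ n ih =>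
    intro j hj x hx
    rw [Function.iterate_succ_apply]
    have hEq : Set.EqOn (deriv (FA a j)) (fun y => (-(j:ℝ)) * FA a (j+1) y) (Set.Ioi 0) :=
      fun y hy => (hasDerivAt_FA ha hj hy).deriv
    rw [iter_deriv_congr isOpen_Ioi hEq n hx, iter_deriv_const_mul]
    beta_reduce
    rw [ih (j+1) (by omega) hx]
    have hidx : j + 1 + n = j + (n+1) := by omega
    rw [hidx]
    have hprod : ∏ i ∈ Finset.range (n+1), ((j:ℝ) + i)
        = (∏ i ∈ Finset.range n, (((j:ℕ):ℝ) + 1 + i)) * ((j:ℝ) + 0) := by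
      rw [Finset.prod_range_succ' (fun i => ((j:ℝ) + i)) n]
      congr 1
      · apply Finset.prod_congr rfl
        intro i _
        push_cast
        ring
      · norm_num
    rw [hprod]
    push_cast
    ring

lemma telescope_hasSum {j : ℕ} (hj : 1 ≤ j) {x : ℝ} (hx : 0 < x) :
    HasSum (fun m : ℕ => ((x + m) ^ j)⁻¹ - ((x + m + 1) ^ j)⁻¹) ((x ^ j)⁻¹) := by
  have hnn : ∀ m : ℕ, 0 ≤ ((x + m) ^ j)⁻¹ - ((x + m + 1) ^ j)⁻¹ := by
    intro m
    have h1 : (0:ℝ) < x + m := by positivity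
    have := pow_le_pow_left₀ h1.le (by linarith : x + (m:ℝ) ≤ x + m + 1) j
    have := inv_anti₀ (by positivity : (0:ℝ) < (x+m)^j) this
    linarith
  rw [hasSum_iff_tendsto_nat_of_nonneg hnn]
  have hsum : ∀ n : ℕ, ∑ m ∈ Finset.range n, (((x + m) ^ j)⁻¹ - ((x + m + 1) ^ j)⁻¹)
      = (x ^ j)⁻¹ - ((x + n) ^ j)⁻¹ := by
    intro n
    have : ∀ m ∈ Finset.range n, ((x + m) ^ j)⁻¹ - ((x + m + 1) ^ j)⁻¹
        = (fun i : ℕ => ((x + i) ^ j)⁻¹) m - (fun i : ℕ => ((x + i) ^ j)⁻¹) (m+1) := by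
      intro m _
      push_cast
      ring_nf
    rw [Finset.sum_congr rfl this, Finset.sum_range_sub' (fun i : ℕ => ((x + i) ^ j)⁻¹) n]
    norm_num
  simp only [hsum]
  have h0 : Tendsto (fun n : ℕ => ((x + n) ^ j)⁻¹) atTop (𝓝 0) := by
    apply Tendsto.inv_tendsto_atTop
    apply Tendsto.comp (tendsto_pow_atTop (by omega : j ≠ 0))
    exact tendsto_atTop_add_const_left _ x tendsto_natCast_atTop_atTop
  have := (tendsto_const_nhds (x := (x ^ j)⁻¹) (f := atTop (α := ℕ))).sub h0
  simpa using this

lemma FA_pos {a : ℝ} (ha : 0 < a) (ha1 : a < 1) {j : ℕ} (hj : 1 ≤ j) {x : ℝ} (hx : 0 < x) :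
    0 < FA a j x := by
  set g : ℕ → ℝ := fun m => a * (((x + m) ^ j)⁻¹ - ((x + m + 1) ^ j)⁻¹) with hg
  have hgsum : HasSum g (a * (x ^ j)⁻¹) := (telescope_hasSum hj hx).mul_left a
  -- strict convexity inequality, termwise
  have hlt : ∀ m : ℕ, g m < ((x + m) ^ j)⁻¹ - ((x + a + m) ^ j)⁻¹ := by
    intro m
    have hconv : StrictConvexOn ℝ (Set.Ioi 0) fun t : ℝ => t ^ (-(j:ℤ)) := by
      apply strictConvexOn_zpow
      · simp; omega
      · have : (1:ℤ) ≤ (j:ℤ) := by exact_mod_cast hj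
        omega
    have h1 : (x + (m:ℝ)) ∈ Set.Ioi (0:ℝ) := by simp; positivity
    have h2 : (x + (m:ℝ) + 1) ∈ Set.Ioi (0:ℝ) := by simp; positivity
    have hne : (x + (m:ℝ)) ≠ (x + (m:ℝ) + 1) := by linarith
    have key := hconv.2 h1 h2 hne (by linarith : (0:ℝ) < 1 - a) ha (by ring)
    simp only [smul_eq_mul] at key
    have harg : (1 - a) * (x + (m:ℝ)) + a * (x + (m:ℝ) + 1) = x + a + m := by ring
    rw [harg] at key
    have hz : ∀ t : ℝ, 0 < t → t ^ (-(j:ℤ)) = (t ^ j)⁻¹ := by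
      intro t ht
      rw [zpow_neg, zpow_natCast]
    rw [hz _ (by positivity), hz _ (by positivity), hz _ (by positivity)] at key
    simp only [hg]
    nlinarith [key]
  have hle : ∀ m : ℕ, g m ≤ ((x + m) ^ j)⁻¹ - ((x + a + m) ^ j)⁻¹ := fun m => (hlt m).le
  have hgnn : ∀ m : ℕ, 0 ≤ g m := by
    intro m
    have h1 : (0:ℝ) < x + m := by positivity
    have := pow_le_pow_left₀ h1.le (by linarith : x + (m:ℝ) ≤ x + m + 1) j
    have := inv_anti₀ (by positivity : (0:ℝ) < (x+m)^j) this
    have : (0:ℝ) ≤ ((x + m) ^ j)⁻¹ - ((x + m + 1) ^ j)⁻¹ := by linarith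
    simp only [hg]
    positivity
  have hmain : a * (x ^ j)⁻¹ < TS a j x := by
    rw [← hgsum.tsum_eq, TS]
    exact Summable.tsum_lt_tsum_of_nonneg hgnn hle (hlt 0) (summable_TS ha hj hx)
  unfold FA
  linarith

theorem stmt_9 (a : ℝ) (ha : a ∈ Set.Ioo (0:ℝ) 1) (k : ℕ) (hk : Even k)
    (n : ℕ) (x : ℝ) (hx : 0 < x) :
    0 < (-1) ^ n *
      deriv^[n] (fun y : ℝ =>
        polygamma k (y + a) - polygamma k y - a * (Nat.factorial k : ℝ) / y ^ (k + 1)) x := by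
  obtain ⟨ha0, ha1⟩ := ha
  have hEq : Set.EqOn (fun y : ℝ =>
      polygamma k (y + a) - polygamma k y - a * (Nat.factorial k : ℝ) / y ^ (k + 1))
      (fun y => (k.factorial : ℝ) * FA a (k+1) y) (Set.Ioi 0) := by
    intro y hy
    have hy0 : (0:ℝ) < y := hy
    simp only
    rw [polygamma_diff ha0 hk hy0, FA]
    have hyne : (y:ℝ) ^ (k+1) ≠ 0 := by positivity
    field_simp
  rw [iter_deriv_congr isOpen_Ioi hEq n hx, iter_deriv_const_mul]
  beta_reduce
  rw [iter_FA ha0 n (k+1) (by omega) hx]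
  have hFA := FA_pos ha0 ha1 (j := k+1+n) (by omega) hx
  have hprod : 0 < ∏ i ∈ Finset.range n, (((k+1:ℕ):ℝ) + i) := by
    apply Finset.prod_pos
    intro i _
    positivity
  have hfact : (0:ℝ) < (k.factorial : ℝ) := by
    exact_mod_cast Nat.factorial_pos k
  have hsq : ((-1:ℝ)^n) * ((-1:ℝ)^n) = 1 := by
    rw [← pow_add]
    exact Even.neg_one_pow ⟨n, rfl⟩
  have hre : (-1:ℝ)^n * ((k.factorial : ℝ) *
      ((((-1:ℝ)^n * ∏ i ∈ Finset.range n, (((k+1:ℕ):ℝ) + i))) * FA a (k+1+n) x))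
      = ((k.factorial : ℝ) * ((∏ i ∈ Finset.range n, (((k+1:ℕ):ℝ) + i)) * FA a (k+1+n) x))
        * (((-1:ℝ)^n) * ((-1:ℝ)^n)) := by
    ring
  rw [hre, hsq, mul_one]
  positivity
end

section
/- For every a in (0,1) and every even nonnegative integer k, the function f_{a,k}(x) = ψ⁽ᵏ⁾(x+a) - ψ⁽ᵏ⁾(x) - a·k!/x^{k+1} is strictly decreasing on (0, ∞). -/
open Real Filter Finset Set Topology

namespace PolyAux

lemma summable_shift (c : ℝ) (hc : 0 < c) (m : ℕ) (hm : 2 ≤ m) :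
    Summable (fun n : ℕ => ((c + n) ^ m)⁻¹) := by
  rw [← summable_nat_add_iff 1]
  have hbase : Summable (fun n : ℕ => (((n : ℝ) + 1) ^ 2)⁻¹) := by
    have := (summable_nat_add_iff (f := fun n : ℕ => ((n : ℝ) ^ 2)⁻¹) 1).mpr
      ((Real.summable_nat_pow_inv (p := 2)).mpr one_lt_two)
    exact this.congr (fun n => by push_cast; ring_nf)
  refine Summable.of_nonneg_of_le (fun n => by positivity) (fun n => ?_) hbase
  have h1 : (1:ℝ) ≤ (n:ℝ) + 1 := by have := (n.cast_nonneg : (0:ℝ) ≤ n); linarith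
  have h2 : ((n:ℝ) + 1) ^ 2 ≤ ((n:ℝ) + 1) ^ m := pow_le_pow_right₀ h1 hm
  have h3 : ((n:ℝ) + 1) ^ m ≤ (c + (n + 1 : ℕ)) ^ m := by
    apply pow_le_pow_left₀ (by positivity)
    push_cast; linarith
  exact inv_anti₀ (by positivity) (le_trans h2 h3)

/-- uniform convergence of partial sums of `c * ((x + n + r)^m)⁻¹` on `Ici δ`. -/
lemma tuo_gen (c r : ℝ) (hr : 0 ≤ r) (m : ℕ) (hm : 2 ≤ m) {δ : ℝ} (hδ : 0 < δ) :
    TendstoUniformlyOn (fun N x => ∑ n ∈ Finset.range N, c * ((x + n + r) ^ m)⁻¹)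
      (fun x => ∑' n : ℕ, c * ((x + n + r) ^ m)⁻¹) atTop (Ici δ) := by
  apply tendstoUniformlyOn_tsum_nat (u := fun n => |c| * ((δ + n) ^ m)⁻¹)
    ((summable_shift δ hδ m hm).mul_left _)
  intro n x hx
  have hx' : δ ≤ x := hx
  have hn := (n.cast_nonneg : (0:ℝ) ≤ n)
  have h1 : (0:ℝ) < δ + n := by positivity
  have hpos : (0:ℝ) < x + n + r := by linarith
  have h2 : (δ + n) ^ m ≤ (x + n + r) ^ m := by
    apply pow_le_pow_left₀ (by positivity); linarith
  rw [norm_mul, Real.norm_eq_abs, Real.norm_eq_abs, abs_inv, abs_of_pos (pow_pos hpos m)]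
  exact mul_le_mul_of_nonneg_left (inv_anti₀ (by positivity) h2) (abs_nonneg c)

lemma tlu_gen (c r : ℝ) (hr : 0 ≤ r) (m : ℕ) (hm : 2 ≤ m) :
    TendstoLocallyUniformlyOn (fun N x => ∑ n ∈ Finset.range N, c * ((x + n + r) ^ m)⁻¹)
      (fun x => ∑' n : ℕ, c * ((x + n + r) ^ m)⁻¹) atTop (Ioi 0) := by
  intro u hu x hx
  have hx' : (0:ℝ) < x := mem_Ioi.mp hx
  refine ⟨Ici (x / 2) ∩ Ioi 0, inter_mem (mem_nhdsWithin_of_mem_nhds (Ici_mem_nhds (by linarith))) self_mem_nhdsWithin, ?_⟩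
  filter_upwards [tuo_gen c r hr m hm (half_pos hx') u hu] with N hN y hy
  exact hN y hy.1


lemma hasDerivAt_term (c : ℝ) (m : ℕ) (hm : 1 ≤ m) {x : ℝ} (hx : 0 < x + c) :
    HasDerivAt (fun y : ℝ => ((y + c) ^ m)⁻¹) (-(m : ℝ) * ((x + c) ^ (m + 1))⁻¹) x := by
  have h1 : HasDerivAt (fun y : ℝ => (y + c) ^ m) ((m : ℝ) * (x + c) ^ (m - 1) * 1) x :=
    (((hasDerivAt_id x).add_const c).pow m)
  have h2 := h1.inv (by positivity)
  convert h2 using 1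
  · rfl
  · rfl
  · rfl
  have hne : x + c ≠ 0 := hx.ne'
  field_simp
  rw [← pow_mul, ← pow_add, show m * 2 = m + 1 + (m - 1) by omega]

/-- The basic series `∑ 1/(x+n)^m`. -/
noncomputable def P (m : ℕ) (x : ℝ) : ℝ := ∑' n : ℕ, ((x + n) ^ m)⁻¹

lemma hasDerivAt_P (m : ℕ) (hm : 2 ≤ m) {x : ℝ} (hx : 0 < x) :
    HasDerivAt (P m) (-(m : ℝ) * P (m + 1) x) x := by
  have hlim := tlu_gen (-(m : ℝ)) 0 le_rfl (m + 1) (by omega)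
  apply hasDerivAt_of_tendstoLocallyUniformlyOn (l := atTop) isOpen_Ioi
    (f := fun N (y : ℝ) => ∑ n ∈ Finset.range N, ((y + n) ^ m)⁻¹)
    (f' := fun N (y : ℝ) => ∑ n ∈ Finset.range N, -(m : ℝ) * ((y + n + 0) ^ (m + 1))⁻¹)
    ?_ ?_ ?_ (mem_Ioi.mpr hx)
  · have e : (fun (y : ℝ) => -(m:ℝ) * P (m + 1) y)
        = (fun (y : ℝ) => ∑' n : ℕ, -(m:ℝ) * ((y + n + 0) ^ (m + 1))⁻¹) := by
      funext y; rw [tsum_mul_left]; simp only [P, add_zero]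
    exact e ▸ hlim
  · filter_upwards with N y hy
    apply HasDerivAt.fun_sum
    intro n _
    simpa [add_zero] using hasDerivAt_term (n : ℝ) m (by omega)
      (by have := (n.cast_nonneg : (0:ℝ) ≤ n); linarith [mem_Ioi.mp hy])
  · intro y hy
    exact (summable_shift y (mem_Ioi.mp hy) m hm).hasSum.tendsto_sum_nat


lemma summable_base : Summable (fun n : ℕ => (((n : ℝ) + 1) ^ 2)⁻¹) := by
  have := (summable_nat_add_iff (f := fun n : ℕ => ((n : ℝ) ^ 2)⁻¹) 1).mpr
    ((Real.summable_nat_pow_inv (p := 2)).mpr one_lt_two)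
  exact this.congr (fun n => by push_cast; ring_nf)

lemma cterm_eq {x : ℝ} (hx : 0 < x) (j : ℕ) :
    ((j : ℝ) + 1)⁻¹ - (x + j + 1)⁻¹ = x / (((j : ℝ) + 1) * (x + j + 1)) := by
  have hj := (j.cast_nonneg : (0:ℝ) ≤ j)
  have h1 : ((j : ℝ) + 1) ≠ 0 := by positivity
  have h2 : (x + j + 1) ≠ 0 := by positivity
  field_simp
  ring

lemma summable_cterm {x : ℝ} (hx : 0 < x) :
    Summable (fun j : ℕ => ((j : ℝ) + 1)⁻¹ - (x + j + 1)⁻¹) := by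
  refine Summable.of_nonneg_of_le (fun j => ?_) (fun j => ?_) (summable_base.mul_left x)
  · rw [cterm_eq hx]
    have hj := (j.cast_nonneg : (0:ℝ) ≤ j)
    positivity
  · rw [cterm_eq hx]
    have hj := (j.cast_nonneg : (0:ℝ) ≤ j)
    rw [div_le_iff₀ (by positivity)]
    have h2 : ((j:ℝ) + 1) ^ 2 ≤ ((j:ℝ) + 1) * (x + j + 1) := by nlinarith
    calc x = x * (((j:ℝ)+1)^2)⁻¹ * ((j:ℝ)+1)^2 := by field_simp
      _ ≤ x * (((j:ℝ)+1)^2)⁻¹ * (((j:ℝ) + 1) * (x + j + 1)) := by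
          apply mul_le_mul_of_nonneg_left h2 (by positivity)

lemma tuo_add_aux {F F' : ℕ → ℝ → ℝ} {G G' : ℝ → ℝ} {s : Set ℝ}
    (h1 : TendstoUniformlyOn F G atTop s) (h2 : TendstoUniformlyOn F' G' atTop s) :
    TendstoUniformlyOn (fun n y => F n y + F' n y) (fun y => G y + G' y) atTop s := by
  rw [Metric.tendstoUniformlyOn_iff] at h1 h2 ⊢
  intro ε hε
  filter_upwards [h1 (ε/2) (by linarith), h2 (ε/2) (by linarith)] with n hn hn' y hy
  have a1 := hn y hy
  have a2 := hn' y hy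
  rw [Real.dist_eq] at a1 a2 ⊢
  calc |G y + G' y - (F n y + F' n y)| = |(G y - F n y) + (G' y - F' n y)| := by congr 1; ring
    _ ≤ |G y - F n y| + |G' y - F' n y| := abs_add_le _ _
    _ < ε := by linarith

lemma tuo_add_fixed {F : ℕ → ℝ → ℝ} {G : ℝ → ℝ} (h : ℝ → ℝ) {s : Set ℝ}
    (h1 : TendstoUniformlyOn F G atTop s) :
    TendstoUniformlyOn (fun n y => h y + F n y) (fun y => h y + G y) atTop s := by
  rw [Metric.tendstoUniformlyOn_iff] at h1 ⊢
  simpa [Real.dist_eq, add_sub_add_left_eq_sub] using h1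


/-- Partial log-Gamma sequence. -/
noncomputable def g (n : ℕ) (x : ℝ) : ℝ :=
  x * Real.log n + Real.log (n.factorial : ℝ) - ∑ j ∈ Finset.range (n + 1), Real.log (x + j)

/-- Its derivative. -/
noncomputable def d (n : ℕ) (x : ℝ) : ℝ :=
  Real.log n - ∑ j ∈ Finset.range (n + 1), (x + j)⁻¹

/-- The limit of `d`, i.e. the digamma function. -/
noncomputable def psi (x : ℝ) : ℝ :=
  -Real.eulerMascheroniConstant + (-x⁻¹ + ∑' j : ℕ, (((j : ℝ) + 1)⁻¹ - (x + j + 1)⁻¹))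

lemma harmonic_cast (n : ℕ) :
    ((harmonic n : ℚ) : ℝ) = ∑ j ∈ Finset.range n, ((j : ℝ) + 1)⁻¹ := by
  rw [harmonic]
  push_cast
  rfl

lemma d_eq (n : ℕ) (x : ℝ) :
    d n x = (Real.log n - ∑ j ∈ Finset.range n, ((j : ℝ) + 1)⁻¹)
      + (-x⁻¹ + ∑ j ∈ Finset.range n, (((j : ℝ) + 1)⁻¹ - (x + j + 1)⁻¹)) := by
  rw [d, Finset.sum_range_succ', Finset.sum_sub_distrib]
  have e1 : ∀ j ∈ Finset.range n, (x + ((j + 1 : ℕ) : ℝ))⁻¹ = (x + j + 1)⁻¹ := by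
    intro j _
    push_cast
    ring_nf
  rw [Finset.sum_congr rfl e1]
  push_cast
  ring

lemma hasDerivAt_g (n : ℕ) {x : ℝ} (hx : 0 < x) : HasDerivAt (g n) (d n x) x := by
  have h1 : HasDerivAt (fun y : ℝ => y * Real.log n + Real.log (n.factorial : ℝ)) (Real.log n) x :=
    (hasDerivAt_mul_const _).add_const _
  have h2 : HasDerivAt (fun y : ℝ => ∑ j ∈ Finset.range (n + 1), Real.log (y + j))
      (∑ j ∈ Finset.range (n + 1), (x + j)⁻¹) x := by
    apply HasDerivAt.fun_sum
    intro j _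
    have hj := (j.cast_nonneg : (0:ℝ) ≤ j)
    have := ((hasDerivAt_id x).add_const (j : ℝ)).log (by positivity)
    simpa using this
  exact h1.sub h2

lemma tendsto_g {x : ℝ} (hx : 0 < x) :
    Tendsto (fun n => g n x) atTop (𝓝 (Real.log (Real.Gamma x))) := by
  have h0 : Tendsto (fun n => Real.log (Real.GammaSeq x n)) atTop
      (𝓝 (Real.log (Real.Gamma x))) :=
    ((Real.continuousAt_log (Real.Gamma_pos_of_pos hx).ne').tendsto).comp
      (Real.GammaSeq_tendsto_Gamma x)
  apply h0.congr'
  filter_upwards [eventually_ge_atTop 1] with n hn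
  have hn0 : (0:ℝ) < n := by exact_mod_cast hn
  have hfac : (0:ℝ) < (n.factorial : ℝ) := by exact_mod_cast n.factorial_pos
  have hterm : ∀ j ∈ Finset.range (n + 1), x + (j : ℝ) ≠ 0 := by
    intro j _
    have hj := (j.cast_nonneg : (0:ℝ) ≤ j)
    positivity
  have hprod : (0:ℝ) < ∏ j ∈ Finset.range (n + 1), (x + j) :=
    Finset.prod_pos (fun j _ => by have hj := (j.cast_nonneg : (0:ℝ) ≤ j); positivity)
  rw [Real.GammaSeq, Real.log_div (by positivity) hprod.ne',
    Real.log_mul (by positivity) hfac.ne', Real.log_rpow hn0,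
    Real.log_prod hterm, g]

lemma tuo_c {R : ℝ} (hR : 0 < R) :
    TendstoUniformlyOn (fun N (y : ℝ) => ∑ j ∈ Finset.range N, (((j : ℝ) + 1)⁻¹ - (y + j + 1)⁻¹))
      (fun y => ∑' j : ℕ, (((j : ℝ) + 1)⁻¹ - (y + j + 1)⁻¹)) atTop (Ioo 0 R) := by
  apply tendstoUniformlyOn_tsum_nat (u := fun j => R * (((j : ℝ) + 1) ^ 2)⁻¹)
    (summable_base.mul_left _)
  intro j y hy
  obtain ⟨hy0, hyR⟩ := hy
  have hj := (j.cast_nonneg : (0:ℝ) ≤ j)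
  rw [Real.norm_eq_abs, cterm_eq hy0, abs_of_pos (by positivity), div_le_iff₀ (by positivity)]
  have h2 : ((j:ℝ) + 1) ^ 2 ≤ ((j:ℝ) + 1) * (y + j + 1) := by nlinarith
  calc y ≤ R := hyR.le
    _ = R * (((j:ℝ)+1)^2)⁻¹ * ((j:ℝ)+1)^2 := by field_simp
    _ ≤ R * (((j:ℝ)+1)^2)⁻¹ * (((j:ℝ) + 1) * (y + j + 1)) :=
        mul_le_mul_of_nonneg_left h2 (by positivity)

lemma tlu_d : TendstoLocallyUniformlyOn d psi atTop (Ioi 0) := by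
  intro u hu x hx
  have hx' : (0:ℝ) < x := hx
  refine ⟨Ioo 0 (x + 1) ∩ Ioi 0,
    inter_mem (mem_nhdsWithin_of_mem_nhds (Ioo_mem_nhds hx' (by linarith))) self_mem_nhdsWithin, ?_⟩
  have T1 : TendstoUniformlyOn
      (fun (n : ℕ) (_ : ℝ) => Real.log n - ∑ j ∈ Finset.range n, ((j : ℝ) + 1)⁻¹)
      (fun _ => -Real.eulerMascheroniConstant) atTop (Ioo 0 (x + 1)) := by
    apply Filter.Tendsto.tendstoUniformlyOn_const
    have h2 := Real.tendsto_harmonic_sub_log.neg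
    apply h2.congr
    intro n
    rw [← harmonic_cast]
    ring
  have T2 := tuo_c (R := x + 1) (by linarith)
  have T12 := tuo_add_aux T1 (tuo_add_fixed (fun y : ℝ => -y⁻¹) T2)
  have key : TendstoUniformlyOn d psi atTop (Ioo 0 (x + 1)) := by
    apply (T12.congr ?_).congr_right ?_
    · filter_upwards with n y hy
      exact (d_eq n y).symm
    · intro y hy
      rfl
  filter_upwards [key u hu] with N hN y hy
  exact hN y hy.1


lemma hasDerivAt_logGamma {x : ℝ} (hx : 0 < x) :
    HasDerivAt (fun y => Real.log (Real.Gamma y)) (psi x) x :=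
  hasDerivAt_of_tendstoLocallyUniformlyOn (l := atTop) isOpen_Ioi tlu_d
    (Filter.Eventually.of_forall (fun n y hy => hasDerivAt_g n (mem_Ioi.mp hy)))
    (fun y hy => tendsto_g (mem_Ioi.mp hy)) (mem_Ioi.mpr hx)

lemma digamma_eq {x : ℝ} (hx : 0 < x) : digamma x = psi x :=
  (hasDerivAt_logGamma hx).deriv

lemma hasDerivAt_psi {x : ℝ} (hx : 0 < x) : HasDerivAt psi (P 2 x) x := by
  have hinv : HasDerivAt (fun y : ℝ => -Real.eulerMascheroniConstant + -y⁻¹) ((x ^ 2)⁻¹) x := by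
    simpa using ((hasDerivAt_inv hx.ne').neg).const_add (-Real.eulerMascheroniConstant)
  have hsum : HasDerivAt (fun y : ℝ => ∑' j : ℕ, (((j : ℝ) + 1)⁻¹ - (y + j + 1)⁻¹))
      (∑' j : ℕ, 1 * ((x + j + 1) ^ 2)⁻¹) x := by
    have hlim := tlu_gen 1 1 zero_le_one 2 le_rfl
    apply hasDerivAt_of_tendstoLocallyUniformlyOn (l := atTop) isOpen_Ioi
      (f := fun N (y : ℝ) => ∑ j ∈ Finset.range N, (((j : ℝ) + 1)⁻¹ - (y + j + 1)⁻¹))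
      (f' := fun N (y : ℝ) => ∑ j ∈ Finset.range N, 1 * ((y + j + 1) ^ 2)⁻¹)
      ?_ ?_ ?_ (mem_Ioi.mpr hx)
    · have e : (fun (y : ℝ) => ∑' j : ℕ, 1 * ((y + j + 1) ^ 2)⁻¹)
          = (fun (y : ℝ) => ∑' j : ℕ, 1 * ((y + (j : ℝ) + 1) ^ 2)⁻¹) := rfl
      exact hlim
    · filter_upwards with N y hy
      apply HasDerivAt.fun_sum
      intro j _
      have hj := (j.cast_nonneg : (0:ℝ) ≤ j)
      have hy' : (0:ℝ) < y := mem_Ioi.mp hy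
      have h := (hasDerivAt_term ((j : ℝ) + 1) 1 le_rfl (x := y) (by positivity)).const_sub
        (((j : ℝ) + 1)⁻¹)
      simpa [pow_one, neg_mul, neg_neg, ← add_assoc] using h
    · intro y hy
      exact (summable_cterm (mem_Ioi.mp hy)).hasSum.tendsto_sum_nat
  have htotal := hinv.add hsum
  have epsi : psi = fun y : ℝ => (-Real.eulerMascheroniConstant + -y⁻¹)
      + ∑' j : ℕ, (((j : ℝ) + 1)⁻¹ - (y + j + 1)⁻¹) := by
    funext y
    rw [psi]
    ring
  have eP : P 2 x = (x ^ 2)⁻¹ + ∑' j : ℕ, 1 * ((x + j + 1) ^ 2)⁻¹ := by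
    rw [P, Summable.tsum_eq_zero_add (summable_shift x hx 2 le_rfl)]
    congr 1
    · norm_num
    · apply tsum_congr
      intro j
      push_cast
      ring_nf
  rw [epsi, eP]
  exact htotal

lemma hasDerivAt_digamma {x : ℝ} (hx : 0 < x) : HasDerivAt digamma (P 2 x) x := by
  apply (hasDerivAt_psi hx).congr_of_eventuallyEq
  filter_upwards [isOpen_Ioi.mem_nhds (mem_Ioi.mpr hx)] with y hy
  exact digamma_eq (mem_Ioi.mp hy)

lemma hasDerivAt_polygamma (k : ℕ) {x : ℝ} (hx : 0 < x) :
    HasDerivAt (polygamma k) ((-1) ^ k * ((k + 1).factorial : ℝ) * P (k + 2) x) x := by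
  induction k generalizing x with
  | zero => simpa [polygamma] using hasDerivAt_digamma hx
  | succ k ih =>
    have heq : ∀ y ∈ Ioi (0:ℝ),
        polygamma (k + 1) y = (-1) ^ k * ((k + 1).factorial : ℝ) * P (k + 2) y := by
      intro y hy
      have : polygamma (k + 1) y = deriv (polygamma k) y := by
        rw [polygamma, Function.iterate_succ_apply']
        rfl
      rw [this]
      exact (ih (mem_Ioi.mp hy)).deriv
    have h2 : HasDerivAt (fun y => (-1) ^ k * ((k + 1).factorial : ℝ) * P (k + 2) y)
        ((-1) ^ k * ((k + 1).factorial : ℝ) * (-((k + 2 : ℕ) : ℝ) * P (k + 2 + 1) x)) x :=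
      (hasDerivAt_P (k + 2) (by omega) hx).const_mul _
    have h3 := h2.congr_of_eventuallyEq
      (eventuallyEq_of_mem (isOpen_Ioi.mem_nhds (mem_Ioi.mpr hx)) heq)
    convert h3 using 1
    · rfl
    · rfl
    rw [show k + 1 + 2 = k + 2 + 1 from rfl, Nat.factorial_succ (k + 1)]
    push_cast
    ring


lemma key (a : ℝ) (ha0 : 0 < a) (ha1 : a < 1) (m : ℕ) (hm : 2 ≤ m) {y : ℝ} (hy : 0 < y) :
    a * (y ^ m)⁻¹ < P m y - P m (y + a) := by
  have S1 := summable_shift y hy m hm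
  have S2 := summable_shift (y + a) (by linarith) m hm
  set G : ℕ → ℝ := fun n => ((y + n) ^ m)⁻¹ with hG
  have hGpos : ∀ n : ℕ, (0:ℝ) < y + n := by
    intro n; have := (n.cast_nonneg : (0:ℝ) ≤ n); linarith
  have hGanti : ∀ n : ℕ, G (n + 1) ≤ G n := by
    intro n
    apply inv_anti₀ (by have := hGpos n; positivity)
    apply pow_le_pow_left₀ (by have := hGpos n; linarith)
    push_cast; linarith
  have hg0 : Tendsto G atTop (𝓝 0) := by
    apply Filter.Tendsto.inv_tendsto_atTop
    exact (tendsto_pow_atTop (by omega : m ≠ 0)).comp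
      (tendsto_atTop_add_const_left _ y tendsto_natCast_atTop_atTop)
  have hTel : HasSum (fun n => G n - G (n + 1)) (G 0) := by
    rw [hasSum_iff_tendsto_nat_of_nonneg (fun n => sub_nonneg.mpr (hGanti n))]
    simp only [Finset.sum_range_sub' G]
    simpa using tendsto_const_nhds.sub hg0
  have hterm : ∀ n : ℕ, a * (G n - G (n + 1)) < ((y + n) ^ m)⁻¹ - ((y + a + n) ^ m)⁻¹ := by
    intro n
    have hn := (n.cast_nonneg : (0:ℝ) ≤ n)
    have hs0 : (0:ℝ) < y + n := hGpos n
    have hconv := strictConvexOn_zpow (m := -(m:ℤ)) (by omega) (by omega)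
    have h := hconv.2 (mem_Ioi.mpr hs0) (mem_Ioi.mpr (by linarith : (0:ℝ) < (y + n) + 1))
      (by linarith : (y + n : ℝ) ≠ (y + n) + 1) (by linarith : (0:ℝ) < 1 - a) ha0 (by ring)
    simp only [smul_eq_mul, zpow_neg, zpow_natCast] at h
    have e0 : (1 - a) * (y + n) + a * ((y + n) + 1) = (y + n) + a := by ring
    rw [e0] at h
    have e1 : G n = (((y:ℝ) + n) ^ m)⁻¹ := rfl
    have e2 : G (n + 1) = (((y + n) + 1) ^ m)⁻¹ := by
      simp only [hG]; push_cast; ring_nf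
    have e3 : ((y + a + n) ^ m)⁻¹ = (((y + n) + a) ^ m)⁻¹ := by ring_nf
    rw [e1, e2, e3]
    nlinarith [h]
  have hL : a * (y ^ m)⁻¹ = ∑' n : ℕ, a * (G n - G (n + 1)) := by
    rw [(hTel.mul_left a).tsum_eq]
    simp [hG]
  have hR : P m y - P m (y + a) = ∑' n : ℕ, (((y + n) ^ m)⁻¹ - ((y + a + n) ^ m)⁻¹) := by
    rw [P, P, Summable.tsum_sub S1 S2]
  rw [hL, hR]
  exact Summable.tsum_lt_tsum (fun n => (hterm n).le) (hterm 0) ((hTel.mul_left a).summable) (S1.sub S2)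

end PolyAux

theorem stmt_10 (a : ℝ) (ha : a ∈ Set.Ioo (0:ℝ) 1) (k : ℕ) (hk : Even k) :
    StrictAntiOn (fun y : ℝ =>
      polygamma k (y + a) - polygamma k y - a * (Nat.factorial k : ℝ) / y ^ (k + 1))
      (Set.Ioi 0) := by
  obtain ⟨ha0, ha1⟩ := ha
  open PolyAux in
  have hD : ∀ y ∈ Set.Ioi (0:ℝ), HasDerivAt (fun y : ℝ =>
      polygamma k (y + a) - polygamma k y - a * (Nat.factorial k : ℝ) / y ^ (k + 1))
      (((k+1).factorial : ℝ) * ((PolyAux.P (k+2) (y+a) - PolyAux.P (k+2) y)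
        + a * (y ^ (k+2))⁻¹)) y := by
    intro y hy
    have hy' : (0:ℝ) < y := hy
    have h1 : HasDerivAt (fun z : ℝ => polygamma k (z + a))
        ((-1)^k * ((k+1).factorial : ℝ) * PolyAux.P (k+2) (y+a)) y := by
      have := (PolyAux.hasDerivAt_polygamma k (x := y + a) (by linarith)).comp y
        ((hasDerivAt_id y).add_const a)
      simp only [mul_one] at this
      exact this
    have h2 := PolyAux.hasDerivAt_polygamma k (x := y) hy'
    have h3 : HasDerivAt (fun z : ℝ => a * (Nat.factorial k : ℝ) / z ^ (k + 1))
        (-(a * ((k+1).factorial : ℝ) * (y ^ (k+2))⁻¹)) y := by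
      have hbase := (PolyAux.hasDerivAt_term 0 (k+1) (by omega) (x := y)
        (by linarith)).const_mul (a * (Nat.factorial k : ℝ))
      have efun : (fun z : ℝ => a * (Nat.factorial k : ℝ) * ((z + 0) ^ (k+1))⁻¹)
          = fun z : ℝ => a * (Nat.factorial k : ℝ) / z ^ (k + 1) := by
        funext z; rw [add_zero, div_eq_mul_inv]
      rw [efun] at hbase
      convert hbase using 1
      · rfl
      · rfl
      rw [add_zero, Nat.factorial_succ]
      push_cast
      ring
    have := (h1.sub h2).sub h3
    convert this using 1
    · rfl
    · rfl
    · rfl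
    rw [hk.neg_one_pow]
    ring
  apply strictAntiOn_of_deriv_neg (convex_Ioi 0)
  · intro y hy
    exact (hD y hy).differentiableAt.continuousAt.continuousWithinAt
  · intro y hy
    rw [interior_Ioi] at hy
    have hy' : (0:ℝ) < y := hy
    rw [(hD y hy).deriv]
    have hkey := PolyAux.key a ha0 ha1 (k+2) (by omega) hy'
    have hfacpos : (0:ℝ) < ((k+1).factorial : ℝ) := by
      exact_mod_cast (k+1).factorial_pos
    apply mul_neg_of_pos_of_neg hfacpos
    linarith
end

section
/- For every a in (0,1) and every even nonnegative integer k, the function f_{a,k}(x) = ψ⁽ᵏ⁾(x+a) - ψ⁽ᵏ⁾(x) - a·k!/x^{k+1} is strictly convex on (0, ∞). -/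
open Real Filter Topology Set Finset

noncomputable def phiS (m : ℕ) (x : ℝ) : ℝ := ∑' n : ℕ, ((x + n) ^ m)⁻¹

noncomputable def Dz (x : ℝ) : ℝ :=
  -Real.eulerMascheroniConstant + ∑' n : ℕ, (((n:ℝ) + 1)⁻¹ - (x + n)⁻¹)



lemma summable_phi {m : ℕ} (hm : 2 ≤ m) {c : ℝ} (hc : 0 < c) :
    Summable (fun n : ℕ => ((c + n) ^ m)⁻¹) := by
  rw [← summable_nat_add_iff 1]
  have hs : Summable (fun n : ℕ => ((((n : ℝ) + 1)) ^ m)⁻¹) := by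
    have := (summable_nat_add_iff (f := fun n : ℕ => (((n : ℝ)) ^ m)⁻¹) 1).2
      ((Real.summable_nat_pow_inv (p := m)).2 (by omega))
    exact this.congr (by intro n; push_cast; ring_nf)
  refine hs.of_nonneg_of_le (fun n => by positivity) (fun n => ?_)
  have h1 : ((n : ℝ) + 1) ≤ c + (n + 1 : ℕ) := by push_cast; linarith
  have h2 : (0:ℝ) < (n : ℝ) + 1 := by positivity
  gcongr


lemma TendstoUniformlyOn.comp_index {ι ι' α β : Type*} [UniformSpace α]
    {F : ι → β → α} {f : β → α} {l : Filter ι} {l' : Filter ι'} {s : Set β}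
    (h : TendstoUniformlyOn F f l s) {g : ι' → ι} (hg : Tendsto g l' l) :
    TendstoUniformlyOn (fun n => F (g n)) f l' s :=
  fun u hu => hg.eventually (h u hu)

lemma hasDerivAt_tsum_Ioi {f f' : ℕ → ℝ → ℝ}
    (hderiv : ∀ n, ∀ x : ℝ, 0 < x → HasDerivAt (f n) (f' n x) x)
    (hsum : ∀ x : ℝ, 0 < x → Summable (fun n => f n x))
    (hbound : ∀ c R : ℝ, 0 < c → ∃ u : ℕ → ℝ, Summable u ∧
        ∀ n, ∀ x ∈ Set.Icc c R, ‖f' n x‖ ≤ u n)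
    {x : ℝ} (hx : 0 < x) :
    HasDerivAt (fun y => ∑' n, f n y) (∑' n, f' n x) x := by
  apply hasDerivAt_of_tendstoLocallyUniformlyOn (l := atTop) (s := Ioi 0) isOpen_Ioi
    (f := fun N y => ∑ n ∈ range N, f n y) (f' := fun N y => ∑ n ∈ range N, f' n y)
    ?_ ?_ ?_ hx
  · rw [tendstoLocallyUniformlyOn_iff_forall_isCompact isOpen_Ioi]
    intro K hK hKc
    rcases K.eq_empty_or_nonempty with rfl | hKne
    · exact tendstoUniformlyOn_empty
    · have hcK : sInf K ∈ K := hKc.sInf_mem hKne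
      have hc : 0 < sInf K := hK hcK
      have hsub : K ⊆ Icc (sInf K) (sSup K) := fun z hz =>
        ⟨csInf_le hKc.isBounded.bddBelow hz, le_csSup hKc.isBounded.bddAbove hz⟩
      obtain ⟨u, hu, hule⟩ := hbound (sInf K) (sSup K) hc
      exact ((tendstoUniformlyOn_tsum_nat hu (fun n y hy => hule n y hy)).mono hsub)
  · filter_upwards with N y hy
    exact HasDerivAt.fun_sum (fun n _ => hderiv n y hy)
  · intro y hy
    exact (hsum y hy).hasSum.tendsto_sum_nat

lemma pow_term_hasDerivAt {m n : ℕ} {y : ℝ} (hy : 0 < y + n) (hm : 1 ≤ m) :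
    HasDerivAt (fun y : ℝ => ((y + n) ^ m)⁻¹) (-(m:ℝ) * ((y + n) ^ (m+1))⁻¹) y := by
  obtain ⟨j, rfl⟩ : ∃ j, m = j + 1 := ⟨m - 1, by omega⟩
  have h0 : HasDerivAt (fun y : ℝ => y + n) 1 y := (hasDerivAt_id y).add_const _
  have h1 := (h0.pow (j+1)).inv (pow_ne_zero _ hy.ne')
  refine h1.congr_deriv ?_
  have ht : (y + (n:ℝ)) ≠ 0 := ne_of_gt hy
  simp only [Pi.pow_apply, Nat.add_sub_cancel]
  field_simp
  ring
lemma hasDerivAt_phiS {m : ℕ} (hm : 2 ≤ m) {x : ℝ} (hx : 0 < x) :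
    HasDerivAt (phiS m) (-(m : ℝ) * phiS (m+1) x) x := by
  have key := hasDerivAt_tsum_Ioi (f := fun n y => ((y + n) ^ m)⁻¹)
    (f' := fun n y => -(m:ℝ) * ((y + n) ^ (m+1))⁻¹)
    (fun n y hy => pow_term_hasDerivAt (by positivity) (by omega))
    (fun y hy => summable_phi hm hy)
    (fun c R hc => ⟨fun n => (m:ℝ) * ((c + n) ^ (m+1))⁻¹,
      (summable_phi (by omega) hc).mul_left _, fun n y hy => by
        have h1 : (0:ℝ) < c + n := by positivity
        have h2 : (0:ℝ) < y + n := lt_of_lt_of_le h1 (by have := hy.1; linarith)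
        rw [norm_mul, norm_neg, norm_natCast, Real.norm_eq_abs,
          abs_of_nonneg (by positivity)]
        have h3 : c + (n:ℝ) ≤ y + n := by have := hy.1; linarith
        exact mul_le_mul_of_nonneg_left
          (inv_anti₀ (by positivity) (pow_le_pow_left₀ h1.le h3 _))
          (by positivity)⟩) hx
  have : ∑' n : ℕ, -(m:ℝ) * ((x + n) ^ (m+1))⁻¹ = -(m : ℝ) * phiS (m+1) x := by
    rw [phiS, tsum_mul_left]
  rw [← this]
  exact key

lemma Dz_term_eq {x : ℝ} (hx : 0 < x) (n : ℕ) :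
    ((n:ℝ) + 1)⁻¹ - (x + n)⁻¹ = (x - 1) * (((n:ℝ) + 1)⁻¹ * (x + n)⁻¹) := by
  have h1 : ((n:ℝ) + 1) ≠ 0 := by positivity
  have h2 : (x + (n:ℝ)) ≠ 0 := by positivity
  field_simp
  ring

lemma inner_bound {x c' : ℝ} (hc' : 0 < c') (hc1 : c' ≤ 1) (hcx : c' ≤ x) (n : ℕ) :
    ((n:ℝ) + 1)⁻¹ * (x + n)⁻¹ ≤ ((c' + n)^2)⁻¹ := by
  have h3 : (0:ℝ) < c' + n := by positivity
  rw [← mul_inv]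
  apply inv_anti₀ (by positivity)
  rw [sq]
  exact mul_le_mul (by linarith) (by linarith) h3.le (by positivity)

lemma harmonic_cast_sum (N : ℕ) :
    ∑ m ∈ range N, ((m:ℝ) + 1)⁻¹ = ((harmonic N : ℚ) : ℝ) := by
  rw [harmonic]
  push_cast
  rfl

lemma hasDerivAt_logGammaSeq (n : ℕ) {x : ℝ} (hx : 0 < x) :
    HasDerivAt (fun y => Real.BohrMollerup.logGammaSeq y n)
      ((Real.log n - ((harmonic (n+1) : ℚ) : ℝ)) +
        ∑ m ∈ range (n+1), (((m:ℝ)+1)⁻¹ - (x+m)⁻¹)) x := by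
  have hsum : HasDerivAt (fun y : ℝ => ∑ m ∈ range (n+1), Real.log (y + m))
      (∑ m ∈ range (n+1), (x + (m:ℝ))⁻¹) x := by
    apply HasDerivAt.fun_sum
    intro m _
    have h1 : x + (m:ℝ) ≠ 0 := by positivity
    simpa using (Real.hasDerivAt_log h1).comp_add_const x (m:ℝ)
  have h2 : HasDerivAt (fun y : ℝ => y * Real.log n + Real.log (Nat.factorial n))
      (Real.log n) x := (hasDerivAt_mul_const _).add_const _
  have h3 := h2.sub hsum
  have hval : Real.log n - ∑ m ∈ range (n+1), (x + (m:ℝ))⁻¹ =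
      (Real.log n - ((harmonic (n+1) : ℚ) : ℝ)) +
        ∑ m ∈ range (n+1), (((m:ℝ)+1)⁻¹ - (x+m)⁻¹) := by
    rw [Finset.sum_sub_distrib, harmonic_cast_sum]
    ring
  rw [← hval]
  exact h3.congr_deriv rfl

lemma tendsto_c :
    Tendsto (fun n : ℕ => Real.log n - ((harmonic (n+1) : ℚ) : ℝ)) atTop
      (𝓝 (-Real.eulerMascheroniConstant)) := by
  have h2 : Tendsto (fun n : ℕ => ((harmonic (n+1) : ℚ) : ℝ) - Real.log (n+1)) atTop
      (𝓝 Real.eulerMascheroniConstant) := by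
    have := Real.tendsto_harmonic_sub_log.comp (tendsto_add_atTop_nat 1)
    simpa [Function.comp_def] using this
  have h3 : Tendsto (fun n : ℕ => Real.log ((n:ℝ)+1) - Real.log n) atTop (𝓝 0) := by
    have hq : Tendsto (fun n : ℕ => ((n:ℝ)+1)/n) atTop (𝓝 1) := by
      have := (tendsto_const_nhds (x := (1:ℝ))).add
        (tendsto_one_div_atTop_nhds_zero_nat)
      apply Tendsto.congr' ?_ (by simpa using this)
      filter_upwards [eventually_ne_atTop 0] with n hn
      have : (n:ℝ) ≠ 0 := Nat.cast_ne_zero.2 hn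
      field_simp
    have hl : Tendsto (fun n : ℕ => Real.log (((n:ℝ)+1)/n)) atTop (𝓝 0) := by
      have := (Real.continuousAt_log one_ne_zero).tendsto.comp hq
      simpa [Function.comp_def] using this
    apply Tendsto.congr' ?_ hl
    filter_upwards [eventually_ne_atTop 0] with n hn
    have hn' : (n:ℝ) ≠ 0 := Nat.cast_ne_zero.2 hn
    rw [Real.log_div (by positivity) hn']
  have h4 := (h2.add h3).neg
  rw [add_zero] at h4
  exact h4.congr (fun n => by ring)

lemma tluo : TendstoLocallyUniformlyOn
    (fun (n:ℕ) (x:ℝ) => (Real.log n - ((harmonic (n+1) : ℚ) : ℝ)) +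
      ∑ m ∈ range (n+1), (((m:ℝ)+1)⁻¹ - (x+m)⁻¹))
    Dz atTop (Ioi 0) := by
  rw [tendstoLocallyUniformlyOn_iff_forall_isCompact isOpen_Ioi]
  intro K hK hKc
  rcases K.eq_empty_or_nonempty with rfl | hKne
  · exact tendstoUniformlyOn_empty
  set c := sInf K with hcdef
  set R := sSup K with hRdef
  have hcK : c ∈ K := hKc.sInf_mem hKne
  have hc : 0 < c := hK hcK
  have hsub : K ⊆ Icc c R := fun z hz =>
    ⟨csInf_le hKc.isBounded.bddBelow hz, le_csSup hKc.isBounded.bddAbove hz⟩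
  have hc' : 0 < min c 1 := lt_min hc one_pos
  have T1 : TendstoUniformlyOn
      (fun (n:ℕ) (_:ℝ) => Real.log n - ((harmonic (n+1) : ℚ) : ℝ))
      (fun _ => -Real.eulerMascheroniConstant) atTop K :=
    tendsto_c.tendstoUniformlyOn_const K
  have T2 : TendstoUniformlyOn
      (fun (n:ℕ) (x:ℝ) => ∑ m ∈ range (n+1), (((m:ℝ)+1)⁻¹ - (x+m)⁻¹))
      (fun x => ∑' m : ℕ, (((m:ℝ)+1)⁻¹ - (x+m)⁻¹)) atTop K := by
    have hu : Summable (fun m : ℕ => (R+1) * ((min c 1 + m)^2)⁻¹) :=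
      (summable_phi le_rfl hc').mul_left _
    have base := tendstoUniformlyOn_tsum hu
      (f := fun (m:ℕ) (x:ℝ) => ((m:ℝ)+1)⁻¹ - (x+m)⁻¹) (s := K) ?_
    · exact base.comp_index (tendsto_finset_range.comp (tendsto_add_atTop_nat 1))
    · intro m x hxK
      show ‖((m:ℝ)+1)⁻¹ - (x+m)⁻¹‖ ≤ _
      have hxc : c ≤ x := (hsub hxK).1
      have hxR : x ≤ R := (hsub hxK).2
      have hx : 0 < x := lt_of_lt_of_le hc hxc
      rw [Dz_term_eq hx m]
      have hn : ‖((m:ℝ) + 1)⁻¹ * (x + m)⁻¹‖ = ((m:ℝ) + 1)⁻¹ * (x + m)⁻¹ := by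
        rw [Real.norm_eq_abs]; exact abs_of_nonneg (by positivity)
      rw [norm_mul, hn, Real.norm_eq_abs]
      have hb1 : |x - 1| ≤ R + 1 := by
        rw [abs_le]; constructor <;> linarith
      have hb2 := inner_bound hc' (min_le_right c 1) (le_trans (min_le_left c 1) hxc) m
      exact mul_le_mul hb1 hb2 (by positivity) (by linarith)
  exact T1.add T2

lemma logGamma_hasDerivAt : ∀ x : ℝ, 0 < x →
    HasDerivAt (fun y => Real.log (Real.Gamma y)) (Dz x) x := by
  intro x hx
  apply hasDerivAt_of_tendstoLocallyUniformlyOn (l := atTop)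
    (f := fun n y => Real.BohrMollerup.logGammaSeq y n) isOpen_Ioi tluo ?_ ?_ hx
  · filter_upwards with n y hy
    exact hasDerivAt_logGammaSeq n hy
  · intro y hy
    exact Real.BohrMollerup.tendsto_log_gamma hy

lemma summable_Dz_terms {x : ℝ} (hx : 0 < x) :
    Summable (fun n : ℕ => ((n:ℝ) + 1)⁻¹ - (x + n)⁻¹) := by
  have hc : (0:ℝ) < min x 1 := lt_min hx one_pos
  have hb : Summable (fun n : ℕ => |x - 1| * ((min x 1 + n)^2)⁻¹) :=
    ((summable_phi le_rfl hc)).mul_left _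
  apply Summable.of_norm_bounded hb
  intro n
  rw [Dz_term_eq hx n, norm_mul]
  have h1 : (0:ℝ) < (n:ℝ) + 1 := by positivity
  have h2 : (0:ℝ) < x + n := by positivity
  have h3 : (0:ℝ) < min x 1 + n := by positivity
  have key : ((min x 1 + n)^2)⁻¹ ≥ ((n:ℝ) + 1)⁻¹ * (x + n)⁻¹ := by
    rw [← mul_inv]
    apply inv_anti₀ (by positivity)
    rw [sq]
    apply mul_le_mul (by linarith [min_le_right x 1])
      (by linarith [min_le_left x 1]) h3.le h1.le
  have hn : ‖((n:ℝ) + 1)⁻¹ * (x + n)⁻¹‖ = ((n:ℝ) + 1)⁻¹ * (x + n)⁻¹ := by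
    rw [Real.norm_eq_abs]; exact abs_of_nonneg (by positivity)
  rw [hn, Real.norm_eq_abs]
  exact mul_le_mul_of_nonneg_left key (abs_nonneg _)


lemma hasDerivAt_Dz {x : ℝ} (hx : 0 < x) : HasDerivAt Dz (phiS 2 x) x := by
  unfold Dz
  have key := hasDerivAt_tsum_Ioi (f := fun n y => ((n:ℝ) + 1)⁻¹ - (y + n)⁻¹)
    (f' := fun n y => ((y + n)^2)⁻¹)
    (fun n y hy => by
      have h2 : (y + (n:ℝ)) ≠ 0 := by positivity
      have := (((hasDerivAt_id y).add_const (n:ℝ)).inv h2).const_sub (((n:ℝ) + 1)⁻¹)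
      refine this.congr_deriv ?_
      simp only [id, neg_div, neg_neg, one_div])
    (fun y hy => summable_Dz_terms hy)
    (fun c R hc => ⟨fun n => ((c + n)^2)⁻¹, summable_phi le_rfl hc, fun n y hy => by
      have h1 : (0:ℝ) < c + n := by positivity
      have h2 : (0:ℝ) < y + n := lt_of_lt_of_le h1 (by have := hy.1; linarith)
      rw [Real.norm_eq_abs, abs_of_nonneg (by positivity)]
      exact inv_anti₀ (by positivity) (pow_le_pow_left₀ h1.le (by have := hy.1; linarith) _)⟩)
    hx
  exact (key.congr_deriv rfl).const_add _

noncomputable def Dfun : ℕ → ℝ → ℝ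
  | 0 => Dz
  | (j+1) => fun x => (-1:ℝ)^j * (Nat.factorial (j+1)) * phiS (j+2) x

lemma hasDerivAt_Dfun (j : ℕ) {x : ℝ} (hx : 0 < x) :
    HasDerivAt (Dfun j) (Dfun (j+1) x) x := by
  cases j with
  | zero => simpa [Dfun] using hasDerivAt_Dz hx
  | succ j =>
    have h := (hasDerivAt_phiS (m := j+2) (by omega) hx).const_mul
      ((-1:ℝ)^j * (Nat.factorial (j+1)))
    show HasDerivAt (fun x => (-1:ℝ)^j * (Nat.factorial (j+1)) * phiS (j+2) x) _ x
    refine h.congr_deriv (Eq.symm ?_)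
    show ((-1:ℝ)^(j+1) * (Nat.factorial (j+2)) * phiS (j+3) x) = _
    rw [Nat.factorial_succ (j+1)]
    push_cast
    ring

lemma polygamma_eqOn (j : ℕ) : Set.EqOn (polygamma j) (Dfun j) (Set.Ioi 0) := by
  induction j with
  | zero => exact fun x hx => (logGamma_hasDerivAt x hx).deriv
  | succ j ih =>
    intro x hx
    have hev : polygamma j =ᶠ[𝓝 x] Dfun j :=
      Filter.eventuallyEq_of_mem (isOpen_Ioi.mem_nhds hx) ih
    have h1 : polygamma (j+1) x = deriv (polygamma j) x := by
      show (deriv^[j+1] digamma) x = _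
      rw [Function.iterate_succ_apply']
      rfl
    rw [h1, hev.deriv_eq, (hasDerivAt_Dfun j hx).deriv]

lemma hasDerivAt_polygamma (j : ℕ) {x : ℝ} (hx : 0 < x) :
    HasDerivAt (polygamma j) (polygamma (j+1) x) x := by
  have hev : Dfun j =ᶠ[𝓝 x] polygamma j :=
    (Filter.eventuallyEq_of_mem (isOpen_Ioi.mem_nhds hx) (polygamma_eqOn j)).symm
  rw [polygamma_eqOn (j+1) hx]
  exact (hasDerivAt_Dfun j hx).congr_of_eventuallyEq hev.symm

lemma key_ineq {m : ℕ} (hm : 2 ≤ m) {a y : ℝ} (ha : 0 < a) (ha1 : a < 1) (hy : 0 < y) :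
    a * (y^m)⁻¹ < phiS m y - phiS m (y + a) := by
  set w : ℕ → ℝ := fun n => ((y + n)^m)⁻¹ with hw
  have hwpos : ∀ n : ℕ, (0:ℝ) < y + n := fun n => by positivity
  have hwanti : ∀ n : ℕ, w (n+1) ≤ w n := by
    intro n
    apply inv_anti₀ (by positivity)
    apply pow_le_pow_left₀ (hwpos n).le (by push_cast; linarith)
  -- telescoping sum
  have hw0 : Tendsto w atTop (𝓝 0) := by
    apply Tendsto.inv_tendsto_atTop
    exact (tendsto_pow_atTop (n := m) (by omega)).comp
      (tendsto_atTop_add_const_left atTop y tendsto_natCast_atTop_atTop)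
  have htel : HasSum (fun n => w n - w (n+1)) (w 0) := by
    rw [hasSum_iff_tendsto_nat_of_nonneg (fun n => by linarith [hwanti n])]
    have : ∀ n : ℕ, ∑ i ∈ range n, (w i - w (i+1)) = w 0 - w n :=
      fun n => Finset.sum_range_sub' w n
    simp_rw [this]
    simpa using tendsto_const_nhds.sub hw0
  have hv : HasSum (fun n => a * (w n - w (n+1))) (a * w 0) := htel.mul_left a
  -- summability of u
  have hu1 : Summable (fun n : ℕ => ((y + n)^m)⁻¹) := summable_phi hm hy
  have hu2 : Summable (fun n : ℕ => ((y + a + n)^m)⁻¹) := summable_phi hm (by positivity)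
  have husum : Summable (fun n : ℕ => ((y + n)^m)⁻¹ - ((y + a + n)^m)⁻¹) := hu1.sub hu2
  -- pointwise strict inequality
  have hpt : ∀ n : ℕ, a * (w n - w (n+1)) < ((y + n)^m)⁻¹ - ((y + a + n)^m)⁻¹ := by
    intro n
    set c : ℝ := y + n with hc
    have hcpos : 0 < c := hwpos n
    have hsc := strictConvexOn_zpow (m := -(m:ℤ)) (by omega) (by omega)
    have h2 := hsc.2 (mem_Ioi.2 hcpos) (mem_Ioi.2 (by linarith : (0:ℝ) < c + 1))
      (by norm_num)
      (by linarith : (0:ℝ) < 1 - a) ha (by ring)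
    simp only [smul_eq_mul] at h2
    have he1 : (1 - a) * c + a * (c + 1) = c + a := by ring
    rw [he1] at h2
    have hz : ∀ t : ℝ, 0 < t → t ^ (-(m:ℤ)) = (t^m)⁻¹ := by
      intro t ht
      rw [zpow_neg, zpow_natCast]
    rw [hz _ (by linarith), hz _ hcpos, hz _ (by linarith)] at h2
    have hwn1 : w (n+1) = ((c + 1)^m)⁻¹ := by
      simp only [hw, hc]
      push_cast
      ring_nf
    have hun : ((y + a + n)^m)⁻¹ = ((c + a)^m)⁻¹ := by rw [hc]; ring_nf
    rw [hwn1, hun]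
    have : w n = (c^m)⁻¹ := rfl
    rw [this]
    linarith
  have hlt : (∑' n, a * (w n - w (n+1))) <
      ∑' n : ℕ, (((y + n)^m)⁻¹ - ((y + a + n)^m)⁻¹) := by
    apply Summable.tsum_lt_tsum_of_nonneg (i := 0)
      (fun n => mul_nonneg ha.le (by linarith [hwanti n])) (fun n => (hpt n).le) (hpt 0) husum
  rw [hv.tsum_eq] at hlt
  rw [Summable.tsum_sub hu1 hu2] at hlt
  have hw00 : w 0 = (y^m)⁻¹ := by simp [hw]
  rw [hw00] at hlt
  exact hlt

lemma hasDerivAt_inv_pow {m : ℕ} (hm : 1 ≤ m) {y : ℝ} (hy : 0 < y) :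
    HasDerivAt (fun y : ℝ => (y ^ m)⁻¹) (-(m:ℝ) * (y ^ (m+1))⁻¹) y := by
  obtain ⟨j, rfl⟩ : ∃ j, m = j + 1 := ⟨m - 1, by omega⟩
  have h1 := ((hasDerivAt_id y).pow (j+1)).inv (pow_ne_zero _ hy.ne')
  refine h1.congr_deriv ?_
  have ht : y ≠ 0 := ne_of_gt hy
  simp only [Pi.pow_apply, id, Nat.add_sub_cancel]
  field_simp
  ring

theorem stmt_11 (a : ℝ) (ha : a ∈ Set.Ioo (0:ℝ) 1) (k : ℕ) (hk : Even k) :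
    StrictConvexOn ℝ (Set.Ioi 0) (fun y : ℝ =>
      polygamma k (y + a) - polygamma k y - a * (Nat.factorial k : ℝ) / y ^ (k + 1)) := by
  obtain ⟨ha0, ha1⟩ := ha
  set F : ℝ → ℝ := fun y =>
    polygamma k (y + a) - polygamma k y - a * (Nat.factorial k : ℝ) / y ^ (k + 1) with hF
  set F1 : ℝ → ℝ := fun y =>
    polygamma (k+1) (y + a) - polygamma (k+1) y
      + (a * (Nat.factorial k : ℝ) * ((k:ℝ)+1)) * (y ^ (k+2))⁻¹ with hF1def
  set F2 : ℝ → ℝ := fun y =>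
    polygamma (k+2) (y + a) - polygamma (k+2) y
      - (a * (Nat.factorial k : ℝ) * ((k:ℝ)+1) * ((k:ℝ)+2)) * (y ^ (k+3))⁻¹ with hF2def
  have hdF : ∀ y ∈ Set.Ioi (0:ℝ), HasDerivAt F (F1 y) y := by
    intro y hy
    rw [Set.mem_Ioi] at hy
    have h1 : HasDerivAt (fun y => polygamma k (y + a)) (polygamma (k+1) (y + a)) y :=
      (hasDerivAt_polygamma k (by positivity)).comp_add_const y a
    have h2 := hasDerivAt_polygamma k hy
    have h3 : HasDerivAt (fun y : ℝ => a * (Nat.factorial k : ℝ) / y ^ (k+1))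
        ((a * (Nat.factorial k : ℝ)) * (-((k:ℝ)+1) * (y ^ (k+2))⁻¹)) y := by
      have := (hasDerivAt_inv_pow (m := k+1) (by omega) hy).const_mul
        (a * (Nat.factorial k : ℝ))
      refine HasDerivAt.congr_deriv (this.congr_of_eventuallyEq ?_) (by push_cast; ring)
      filter_upwards with z
      rw [div_eq_mul_inv]
    refine ((h1.sub h2).sub h3).congr_deriv ?_
    rw [hF1def]
    push_cast
    ring
  have hdF1 : ∀ y ∈ Set.Ioi (0:ℝ), HasDerivAt F1 (F2 y) y := by
    intro y hy
    rw [Set.mem_Ioi] at hy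
    have h1 : HasDerivAt (fun y => polygamma (k+1) (y + a)) (polygamma (k+2) (y + a)) y :=
      (hasDerivAt_polygamma (k+1) (by positivity)).comp_add_const y a
    have h2 := hasDerivAt_polygamma (k+1) hy
    have h3 := (hasDerivAt_inv_pow (m := k+2) (by omega) hy).const_mul
      (a * (Nat.factorial k : ℝ) * ((k:ℝ)+1))
    refine ((h1.sub h2).add h3).congr_deriv ?_
    rw [hF2def]
    push_cast
    ring
  have hF2pos : ∀ y ∈ Set.Ioi (0:ℝ), 0 < F2 y := by
    intro y hy
    rw [Set.mem_Ioi] at hy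
    have hpg : ∀ z : ℝ, 0 < z → polygamma (k+2) z
        = -((Nat.factorial (k+2) : ℝ)) * phiS (k+3) z := by
      intro z hz
      rw [polygamma_eqOn (k+2) (Set.mem_Ioi.2 hz)]
      show (-1:ℝ)^(k+1) * (Nat.factorial (k+2)) * phiS (k+3) z = _
      rw [pow_succ, hk.neg_one_pow]
      ring
    rw [hF2def]
    simp only
    rw [hpg _ (by positivity), hpg _ hy]
    have hkey := key_ineq (m := k+3) (by omega) ha0 ha1 hy
    have hfac : (0:ℝ) < (Nat.factorial (k+2) : ℝ) := by positivity
    have hfac2 : (a * (Nat.factorial k : ℝ) * ((k:ℝ)+1) * ((k:ℝ)+2))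
        = (Nat.factorial (k+2) : ℝ) * a := by
      rw [Nat.factorial_succ, Nat.factorial_succ]
      push_cast
      ring
    rw [hfac2]
    calc (0:ℝ) < (Nat.factorial (k+2) : ℝ) *
        ((phiS (k+3) y - phiS (k+3) (y + a)) - a * (y ^ (k+3))⁻¹) := by
          apply mul_pos hfac
          linarith
      _ = -(Nat.factorial (k+2) : ℝ) * phiS (k+3) (y + a)
          - -(Nat.factorial (k+2) : ℝ) * phiS (k+3) y
          - (Nat.factorial (k+2) : ℝ) * a * (y ^ (k+3))⁻¹ := by ring
  apply strictConvexOn_of_deriv2_pos (convex_Ioi 0)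
  · intro y hy
    exact (hdF y hy).continuousAt.continuousWithinAt
  · intro y hy
    rw [interior_Ioi] at hy
    have e1 : Set.EqOn (deriv F) F1 (Set.Ioi 0) := fun z hz => (hdF z hz).deriv
    have e2 : deriv F =ᶠ[𝓝 y] F1 := Filter.eventuallyEq_of_mem (isOpen_Ioi.mem_nhds hy) e1
    have : deriv^[2] F y = deriv (deriv F) y := rfl
    rw [this, e2.deriv_eq, (hdF1 y hy).deriv]
    exact hF2pos y hy
end

section
/- For every x > 1, one has 1/(2x) < ψ(x + 1/2) - ψ(x) < 1/(2x) + 3/2 - 2·log 2. -/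
open Real Set Filter Topology Finset

namespace Stmt13

lemma diffAt {x : ℝ} (hx : 0 < x) :
    DifferentiableAt ℝ (fun x => Real.log (Real.Gamma x)) x :=
  (Real.differentiableAt_Gamma fun m =>
    ((neg_nonpos.mpr m.cast_nonneg).trans_lt hx).ne').log (Real.Gamma_pos_of_pos hx).ne'

lemma digamma_rec {x : ℝ} (hx : 0 < x) : digamma (x + 1) = digamma x + 1 / x := by
  unfold digamma
  rw [← deriv_comp_add_const, one_div, ← Real.deriv_log,
    ← deriv_add (diffAt hx) (Real.differentiableAt_log hx.ne')]
  apply Filter.EventuallyEq.deriv_eq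
  filter_upwards [eventually_gt_nhds hx] with y hy
  rw [Real.Gamma_add_one hy.ne', Real.log_mul hy.ne' (Real.Gamma_pos_of_pos hy).ne', add_comm]
  rfl

lemma digamma_one : digamma 1 = -Real.eulerMascheroniConstant := by
  unfold digamma
  rw [deriv.log (Real.differentiableAt_Gamma fun m => by
        have := m.cast_nonneg (α := ℝ); intro h; linarith [h ▸ (by norm_num : (1:ℝ) > 0)])
      (by rw [Real.Gamma_one]; norm_num),
    Real.hasDerivAt_Gamma_one.deriv, Real.Gamma_one, div_one]

lemma digamma_half : digamma (1/2) = -(Real.eulerMascheroniConstant + 2 * Real.log 2) := by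
  have hs : (0:ℝ) < Real.sqrt π := Real.sqrt_pos.mpr Real.pi_pos
  unfold digamma
  rw [deriv.log (Real.differentiableAt_Gamma fun m => by
        have := m.cast_nonneg (α := ℝ); intro h; nlinarith)
      (by rw [Real.Gamma_one_half_eq]; exact hs.ne'),
    Real.hasDerivAt_Gamma_one_half.deriv, Real.Gamma_one_half_eq]
  field_simp

lemma digamma_mono {a b : ℝ} (ha : 0 < a) (hab : a ≤ b) : digamma a ≤ digamma b := by
  have := Real.convexOn_log_Gamma.monotoneOn_deriv
    (fun y hy => diffAt (mem_Ioi.mp hy)) (mem_Ioi.mpr ha) (mem_Ioi.mpr (ha.trans_le hab)) hab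
  exact this

noncomputable def D (y : ℝ) : ℝ := digamma (y + 1/2) - digamma y

lemma D_nonneg {y : ℝ} (hy : 0 < y) : 0 ≤ D y :=
  sub_nonneg.mpr (digamma_mono hy (by linarith))

lemma D_le {y : ℝ} (hy : 0 < y) : D y ≤ 1 / y := by
  have h1 : digamma (y + 1) = digamma y + 1 / y := digamma_rec hy
  have h2 : digamma (y + 1/2) ≤ digamma (y + 1) := digamma_mono (by linarith) (by linarith)
  simp only [D]; linarith

lemma D_rec {y : ℝ} (hy : 0 < y) : D (y + 1) = D y + 1 / (y + 1/2) - 1 / y := by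
  have h1 : digamma (y + 1) = digamma y + 1 / y := digamma_rec hy
  have h2 : digamma (y + 1/2 + 1) = digamma (y + 1/2) + 1 / (y + 1/2) :=
    digamma_rec (by linarith)
  have h3 : y + 1 + 1/2 = y + 1/2 + 1 := by ring
  simp only [D, h3, h2, h1]; ring

lemma partial_sum {x : ℝ} (hx : 0 < x) (N : ℕ) :
    ∑ n ∈ range N, (1/(x+n) - 1/(x+n+1/2)) = D x - D (x + N) := by
  induction N with
  | zero => simp
  | succ N ih =>
    have hxN : (0:ℝ) < x + N := by positivity
    have hc : x + (N + 1 : ℕ) = (x + N) + 1 := by push_cast; ring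
    rw [Finset.sum_range_succ, ih, hc, D_rec hxN]
    ring

lemma tendsto_D {x : ℝ} (hx : 0 < x) :
    Tendsto (fun n : ℕ => D (x + n)) atTop (𝓝 0) := by
  have h0 : Tendsto (fun n : ℕ => 1 / (x + n)) atTop (𝓝 0) := by
    simp only [one_div]
    exact (tendsto_atTop_add_const_left atTop x tendsto_natCast_atTop_atTop).inv_tendsto_atTop
  refine squeeze_zero (fun n => D_nonneg (by positivity)) (fun n => D_le (by positivity)) h0

lemma hasSum_D {x : ℝ} (hx : 0 < x) :
    HasSum (fun n : ℕ => 1/(x+n) - 1/(x+n+1/2)) (D x) := by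
  have hnn : ∀ n : ℕ, 0 ≤ 1/(x+n) - 1/(x+n+1/2) := by
    intro n
    have h1 : (0:ℝ) < x + n := by positivity
    have := one_div_le_one_div_of_le h1 (by linarith : x + n ≤ x + n + 1/2)
    linarith
  rw [hasSum_iff_tendsto_nat_of_nonneg hnn]
  have : Tendsto (fun n : ℕ => D x - D (x + n)) atTop (𝓝 (D x - 0)) :=
    tendsto_const_nhds.sub (tendsto_D hx)
  rw [sub_zero] at this
  exact this.congr fun n => (partial_sum hx n).symm

lemma hasSum_half {x : ℝ} (hx : 0 < x) :
    HasSum (fun n : ℕ => 1/(2*(x+n)) - 1/(2*(x+n+1))) (1/(2*x)) := by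
  have hnn : ∀ n : ℕ, 0 ≤ 1/(2*(x+n)) - 1/(2*(x+n+1)) := by
    intro n
    have h1 : (0:ℝ) < 2*(x + n) := by positivity
    have := one_div_le_one_div_of_le h1 (by linarith : 2*(x + n) ≤ 2*(x + n + 1))
    linarith
  rw [hasSum_iff_tendsto_nat_of_nonneg hnn]
  have hps : ∀ N : ℕ, ∑ n ∈ range N, (1/(2*(x+n)) - 1/(2*(x+n+1)))
      = 1/(2*x) - 1/(2*(x+N)) := by
    intro N
    induction N with
    | zero => simp
    | succ N ih =>
      rw [Finset.sum_range_succ, ih]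
      push_cast
      ring
  have h0 : Tendsto (fun n : ℕ => 1 / (2*(x + n))) atTop (𝓝 0) := by
    simp only [one_div]
    apply Filter.Tendsto.inv_tendsto_atTop
    apply tendsto_atTop_mono (fun n : ℕ => by linarith [n.cast_nonneg (α := ℝ)] :
      ∀ n : ℕ, x + n ≤ 2*(x + n))
    exact tendsto_atTop_add_const_left atTop x tendsto_natCast_atTop_atTop
  have : Tendsto (fun n : ℕ => 1/(2*x) - 1/(2*(x+n))) atTop (𝓝 (1/(2*x) - 0)) :=
    tendsto_const_nhds.sub h0
  rw [sub_zero] at this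
  exact this.congr fun n => (hps n).symm

lemma term_diff {u : ℝ} (hu : 0 < u) :
    (1/u - 1/(u+1/2)) - (1/(2*u) - 1/(2*(u+1))) = 1/(4*u*(u+1/2)*(u+1)) := by
  have h1 : u + 1/2 ≠ 0 := by positivity
  have h2 : u + 1 ≠ 0 := by positivity
  field_simp
  ring

lemma D_one : D 1 = 2 - 2 * Real.log 2 := by
  have h32 : (1:ℝ) + 1/2 = 1/2 + 1 := by norm_num
  have := digamma_rec (x := 1/2) (by norm_num)
  simp only [D, h32, this, digamma_half, digamma_one]
  ring

end Stmt13

open Stmt13 Finset Real in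
theorem stmt_13 (x : ℝ) (hx : 1 < x) :
    1 / (2 * x) < digamma (x + 1/2) - digamma x ∧
    digamma (x + 1/2) - digamma x < 1 / (2 * x) + 3/2 - 2 * Real.log 2 := by
  have hx0 : (0:ℝ) < x := by linarith
  have hDx := hasSum_D hx0
  have hHx := hasSum_half hx0
  constructor
  · -- lower bound
    rw [← hHx.tsum_eq, show digamma (x + 1/2) - digamma x = D x from rfl, ← hDx.tsum_eq]
    refine Summable.tsum_lt_tsum (i := 0) (fun n => ?_) ?_ hHx.summable hDx.summable
    · have hu : (0:ℝ) < x + n := by positivity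
      have := term_diff hu
      have hpos : (0:ℝ) < 1/(4*(x+n)*((x+n)+1/2)*((x+n)+1)) := by positivity
      nlinarith [hpos, this]
    · have hu : (0:ℝ) < x + (0:ℕ) := by norm_num; linarith
      push_cast at hu ⊢
      have := term_diff (u := x) hx0
      have hpos : (0:ℝ) < 1/(4*x*(x+1/2)*(x+1)) := by positivity
      simp only [add_zero]
      nlinarith [hpos, this]
  · -- upper bound
    have hD1 := hasSum_D (x := 1) one_pos
    have hH1 := hasSum_half (x := 1) one_pos
    have hsub : HasSum (fun n : ℕ => (1/(x+n) - 1/(x+n+1/2)) - (1/(2*(x+n)) - 1/(2*(x+n+1))))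
        (D x - 1/(2*x)) := hDx.sub hHx
    have hsub1 : HasSum (fun n : ℕ => (1/((1:ℝ)+n) - 1/((1:ℝ)+n+1/2)) - (1/(2*((1:ℝ)+n)) - 1/(2*((1:ℝ)+n+1))))
        (D 1 - 1/(2*1)) := hD1.sub hH1
    have key : D x - 1/(2*x) < D 1 - 1/(2*1) := by
      rw [← hsub.tsum_eq, ← hsub1.tsum_eq]
      refine Summable.tsum_lt_tsum (i := 0) (fun n => ?_) ?_ hsub.summable hsub1.summable
      · have hu : (0:ℝ) < 1 + n := by positivity
        have hux : (0:ℝ) < x + n := by positivity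
        rw [term_diff hux, term_diff hu]
        apply le_of_lt
        apply one_div_lt_one_div_of_lt (by positivity)
        have h1 : 1 + (n:ℝ) < x + n := by linarith
        gcongr
      · have hux : (0:ℝ) < x + (0:ℕ) := by push_cast; linarith
        push_cast
        simp only [add_zero]
        rw [term_diff hx0, term_diff one_pos]
        apply one_div_lt_one_div_of_lt (by positivity)
        gcongr
    have : D x - 1/(2*x) < 3/2 - 2 * Real.log 2 := by
      rw [D_one] at key; norm_num at key ⊢; linarith
    show digamma (x + 1/2) - digamma x < _
    have hDdef : digamma (x + 1/2) - digamma x = D x := rfl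
    linarith [hDdef ▸ this]
end

section
/- For every x > 1, one has 1/x³ < ψ''(x + 1/2) - ψ''(x) < 1/x³ + 15 - 12·ζ(3). -/
open Real Filter Set Topology Finset

namespace Aux14

lemma summable_base (p : ℕ) (hp : 1 < p) : Summable (fun m : ℕ => 1 / ((m : ℝ) + 1) ^ p) := by
  have h := (summable_nat_add_iff (f := fun n : ℕ => 1 / (n : ℝ) ^ p) 1).mpr
    (Real.summable_one_div_nat_pow.mpr hp)
  refine h.congr fun m => ?_
  push_cast
  ring

lemma summable_shift {c : ℝ} (hc : 0 < c) {p : ℕ} (hp : 1 < p) :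
    Summable (fun m : ℕ => 1 / (c + m) ^ p) := by
  rw [← summable_nat_add_iff 1]
  refine Summable.of_nonneg_of_le (fun m => by positivity) (fun m => ?_) (summable_base p hp)
  refine one_div_le_one_div_of_le (by positivity) (pow_le_pow_left₀ (by positivity) ?_ p)
  push_cast
  linarith

lemma summable_prod {a : ℝ} (ha : 0 < a) :
    Summable (fun m : ℕ => 1 / (((m : ℝ) + 1) * (a + m))) := by
  rw [← summable_nat_add_iff 1]
  refine Summable.of_nonneg_of_le (fun m => by positivity) (fun m => ?_)
    (summable_base 2 one_lt_two)
  apply one_div_le_one_div_of_le (by positivity)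
  push_cast
  nlinarith [ha.le, Nat.cast_nonneg (α := ℝ) m]

lemma hasDerivAt_log_shift (a : ℝ) {x : ℝ} (h : 0 < x + a) :
    HasDerivAt (fun y : ℝ => Real.log (y + a)) (1 / (x + a)) x := by
  simpa using ((hasDerivAt_id x).add_const a).log h.ne'

lemma hasDerivAt_one_div_shift (a : ℝ) {x : ℝ} (h : 0 < x + a) :
    HasDerivAt (fun y : ℝ => 1 / (y + a)) (-(1 / (x + a) ^ 2)) x := by
  have h1 : HasDerivAt (fun y : ℝ => (y + a)⁻¹) (-1 / (x + a) ^ 2) x :=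
    ((hasDerivAt_id x).add_const a).fun_inv h.ne'
  simp only [one_div]
  convert h1 using 1
  field_simp

lemma hasDerivAt_one_div_sq (a : ℝ) {x : ℝ} (h : 0 < x + a) :
    HasDerivAt (fun y : ℝ => 1 / (y + a) ^ 2) (-2 / (x + a) ^ 3) x := by
  have h0 : HasDerivAt (fun y : ℝ => (y + a) ^ 2) (2 * (x + a)) x := by
    simpa using ((hasDerivAt_id x).add_const a).fun_pow 2
  have h1 : HasDerivAt (fun y : ℝ => ((y + a) ^ 2)⁻¹) _ x := h0.fun_inv (by positivity)
  simp only [one_div]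
  convert h1 using 1
  have : x + a ≠ 0 := h.ne'
  field_simp

lemma hasDerivAt_one_div_cube (a : ℝ) {x : ℝ} (h : 0 < x + a) :
    HasDerivAt (fun y : ℝ => 1 / (y + a) ^ 3) (-3 / (x + a) ^ 4) x := by
  have h0 : HasDerivAt (fun y : ℝ => (y + a) ^ 3) (3 * (x + a) ^ 2) x := by
    simpa using ((hasDerivAt_id x).add_const a).fun_pow 3
  have h1 : HasDerivAt (fun y : ℝ => ((y + a) ^ 3)⁻¹) _ x := h0.fun_inv (by positivity)
  simp only [one_div]
  convert h1 using 1
  have : x + a ≠ 0 := h.ne'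
  field_simp

/-- the function controlling `ψ''(x+1/2) - ψ''(x) - 1/x³`. -/
noncomputable def cfun (y : ℝ) : ℝ := 1 / y ^ 3 - 2 / (y + 1/2) ^ 3 + 1 / (y + 1) ^ 3

lemma cfun_pos {y : ℝ} (hy : 0 < y) : 0 < cfun y := by
  have h1 : (0:ℝ) < y + 1/2 := by linarith
  have h2 : (0:ℝ) < y + 1 := by linarith
  have key : cfun y = (3 * y ^ 4 + 6 * y ^ 3 + (33/8) * y ^ 2 + (9/8) * y + 1/8) /
      (y ^ 3 * (y + 1/2) ^ 3 * (y + 1) ^ 3) := by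
    unfold cfun
    field_simp
    ring
  rw [key]
  positivity

lemma hasDerivAt_cfun {y : ℝ} (hy : 0 < y) :
    HasDerivAt cfun (-3 / y ^ 4 - 2 * (-3 / (y + 1/2) ^ 4) + -3 / (y + 1) ^ 4) y := by
  have h1 : (0:ℝ) < y + 1/2 := by linarith
  have h2 : (0:ℝ) < y + 1 := by linarith
  have d1 := hasDerivAt_one_div_cube 0 (by simpa using hy)
  have d2 := hasDerivAt_one_div_cube (1/2) h1
  have d3 := hasDerivAt_one_div_cube 1 h2
  simp only [add_zero] at d1
  have h := (d1.fun_sub (d2.const_mul 2)).fun_add d3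
  have hfun : (fun t : ℝ => 1 / t ^ 3 - 2 * (1 / (t + 1/2) ^ 3) + 1 / (t + 1) ^ 3) = cfun := by
    funext t; unfold cfun; ring
  rw [hfun] at h
  exact h

lemma cderiv_neg {y : ℝ} (hy : 0 < y) :
    -3 / y ^ 4 - 2 * (-3 / (y + 1/2) ^ 4) + -3 / (y + 1) ^ 4 < 0 := by
  have h1 : (0:ℝ) < y + 1/2 := by linarith
  have h2 : (0:ℝ) < y + 1 := by linarith
  have key : -3 / y ^ 4 - 2 * (-3 / (y + 1/2) ^ 4) + -3 / (y + 1) ^ 4 =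
      -(3 * (5 * y ^ 6 + 15 * y ^ 5 + (145/8) * y ^ 4 + (45/4) * y ^ 3 + (31/8) * y ^ 2
          + (3/4) * y + 1/16)) / (y ^ 4 * (y + 1/2) ^ 4 * (y + 1) ^ 4) := by
    field_simp
    ring
  rw [key]
  apply div_neg_of_neg_of_pos
  · nlinarith [pow_pos hy 6, pow_pos hy 5, pow_pos hy 4, pow_pos hy 3, pow_pos hy 2]
  · positivity

lemma cfun_strictAnti : StrictAntiOn cfun (Ioi 0) := by
  apply strictAntiOn_of_deriv_neg (convex_Ioi 0)
  · intro y hy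
    exact (hasDerivAt_cfun hy).continuousAt.continuousWithinAt
  · intro y hy
    rw [interior_Ioi] at hy
    rw [(hasDerivAt_cfun hy).deriv]
    exact cderiv_neg hy


noncomputable def trig (x : ℝ) : ℝ := ∑' m : ℕ, 1 / (x + m) ^ 2
noncomputable def tet (x : ℝ) : ℝ := ∑' m : ℕ, -2 / (x + m) ^ 3
noncomputable def z3 : ℝ := (riemannZeta 3).re

lemma summable_tet {x : ℝ} (hx : 0 < x) : Summable (fun m : ℕ => -2 / (x + m) ^ 3) := by
  refine ((summable_shift hx (by norm_num : (1:ℕ) < 3)).mul_left (-2)).congr fun m => ?_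
  rw [mul_one_div]

lemma hasSum_telescope {x : ℝ} (hx : 0 < x) :
    HasSum (fun m : ℕ => 1 / (x + m) ^ 3 - 1 / (x + m + 1) ^ 3) (1 / x ^ 3) := by
  have hshift : Summable (fun m : ℕ => 1 / (x + m + 1) ^ 3) := by
    refine ((summable_nat_add_iff 1).mpr (summable_shift hx (by norm_num : (1:ℕ) < 3))).congr
      fun m => ?_
    push_cast
    ring_nf
  have hs : Summable (fun m : ℕ => 1 / (x + m) ^ 3 - 1 / (x + m + 1) ^ 3) :=
    (summable_shift hx (by norm_num : (1:ℕ) < 3)).sub hshift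
  have heq : ∀ n : ℕ, ∑ i ∈ Finset.range n, (1 / (x + i) ^ 3 - 1 / (x + i + 1) ^ 3)
      = 1 / x ^ 3 - 1 / (x + n) ^ 3 := by
    intro n
    have h := Finset.sum_range_sub' (fun i : ℕ => 1 / (x + i) ^ 3) n
    simp only [Nat.cast_zero, add_zero, Nat.cast_add, Nat.cast_one, ← add_assoc] at h
    exact h
  have hzero : Tendsto (fun n : ℕ => 1 / (x + n) ^ 3) atTop (𝓝 0) := by
    have hA : Tendsto (fun n : ℕ => x + (n : ℝ)) atTop atTop :=
      tendsto_atTop_add_const_left _ x tendsto_natCast_atTop_atTop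
    have hB : Tendsto (fun n : ℕ => (x + (n : ℝ)) ^ 3) atTop atTop :=
      (tendsto_pow_atTop (by norm_num : 3 ≠ 0)).comp hA
    simpa [one_div, Pi.inv_def] using hB.inv_tendsto_atTop
  have key : Tendsto (fun n : ℕ => ∑ i ∈ Finset.range n,
      (1 / (x + i) ^ 3 - 1 / (x + i + 1) ^ 3)) atTop (𝓝 (1 / x ^ 3)) := by
    have h := (tendsto_const_nhds (x := 1 / x ^ 3) (f := atTop (α := ℕ))).sub hzero
    rw [sub_zero] at h
    simp only [heq]
    exact h
  have : (∑' m : ℕ, (1 / (x + m) ^ 3 - 1 / (x + m + 1) ^ 3)) = 1 / x ^ 3 :=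
    tendsto_nhds_unique hs.hasSum.tendsto_sum_nat key
  exact this ▸ hs.hasSum

lemma hasSum_G {x : ℝ} (hx : 0 < x) :
    HasSum (fun m : ℕ => cfun (x + m)) (tet (x + 1/2) - tet x - 1 / x ^ 3) := by
  have hx2 : 0 < x + 1/2 := by linarith
  have h1 : HasSum (fun m : ℕ => -2 / (x + 1/2 + m) ^ 3) (tet (x + 1/2)) :=
    (summable_tet hx2).hasSum
  have h2 : HasSum (fun m : ℕ => -2 / (x + m) ^ 3) (tet x) := (summable_tet hx).hasSum
  have h3 := hasSum_telescope hx
  have h := (h1.sub h2).sub h3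
  have hfe : (fun m : ℕ => -2 / (x + 1/2 + m) ^ 3 - -2 / (x + m) ^ 3
      - (1 / (x + m) ^ 3 - 1 / (x + m + 1) ^ 3)) = fun m : ℕ => cfun (x + m) := by
    funext m
    unfold cfun
    have d1 : (0:ℝ) < x + m := by positivity
    have d2 : (0:ℝ) < x + 1/2 + m := by positivity
    have d3 : (0:ℝ) < x + m + 1 := by positivity
    have e1 : x + ↑m + 1/2 = x + 1/2 + ↑m := by ring
    rw [e1]
    ring
  rwa [hfe] at h

lemma z3_eq : z3 = ∑' n : ℕ, 1 / (n : ℝ) ^ 3 := by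
  unfold z3
  rw [show (3:ℂ) = ((3:ℕ):ℂ) by norm_num, zeta_nat_eq_tsum_of_gt_one (by norm_num)]
  rw [show (∑' n : ℕ, 1 / (n : ℂ) ^ 3) = ((∑' n : ℕ, 1 / (n : ℝ) ^ 3 : ℝ) : ℂ) by
    rw [Complex.ofReal_tsum]; exact tsum_congr fun n => by push_cast; ring]
  exact Complex.ofReal_re _

lemma sumA : ∑' m : ℕ, 1 / (1 + (m : ℝ)) ^ 3 = z3 := by
  have hs : Summable (fun n : ℕ => 1 / (n : ℝ) ^ 3) := Real.summable_one_div_nat_pow.mpr (by norm_num)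
  rw [z3_eq, Summable.tsum_eq_zero_add hs]
  simp only [Nat.cast_zero]
  rw [show 1 / (0:ℝ) ^ 3 = 0 by norm_num, zero_add]
  exact tsum_congr fun n => by push_cast; ring_nf

lemma sumC : ∑' m : ℕ, 1 / (2 + (m : ℝ)) ^ 3 = z3 - 1 := by
  have hs : Summable (fun m : ℕ => 1 / (1 + (m : ℝ)) ^ 3) := summable_shift one_pos (by norm_num)
  have h := Summable.tsum_eq_zero_add hs
  rw [sumA] at h
  have h2 : (fun m : ℕ => 1 / (1 + ((m + 1 : ℕ) : ℝ)) ^ 3) = fun m : ℕ => 1 / (2 + (m : ℝ)) ^ 3 := by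
    funext m; push_cast; ring_nf
  rw [h2] at h
  have h0 : 1 / (1 + ((0:ℕ):ℝ)) ^ 3 = 1 := by norm_num
  rw [h0] at h
  linarith


lemma summable_odd : Summable (fun m : ℕ => 1 / (2 * (m : ℝ) + 1) ^ 3) := by
  refine Summable.of_nonneg_of_le (fun m => by positivity) (fun m => ?_)
    (summable_base 3 (by norm_num))
  apply one_div_le_one_div_of_le (by positivity)
  have : (m : ℝ) + 1 ≤ 2 * m + 1 := by nlinarith [Nat.cast_nonneg (α := ℝ) m]
  exact pow_le_pow_left₀ (by positivity) this 3

lemma sum_odd : ∑' m : ℕ, 1 / (2 * (m : ℝ) + 1) ^ 3 = 7 / 8 * z3 := by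
  have hs : Summable (fun n : ℕ => 1 / (n : ℝ) ^ 3) :=
    Real.summable_one_div_nat_pow.mpr (by norm_num)
  have he : Summable (fun k : ℕ => 1 / ((2 * k : ℕ) : ℝ) ^ 3) := by
    refine ((hs.mul_left (1/8)).congr fun m => ?_)
    push_cast
    rcases Nat.eq_zero_or_pos m with rfl | hm
    · norm_num
    · have : ((m:ℝ)) ≠ 0 := Nat.cast_ne_zero.mpr hm.ne'
      field_simp
      ring
  have ho : Summable (fun k : ℕ => 1 / ((2 * k + 1 : ℕ) : ℝ) ^ 3) := by
    refine summable_odd.congr fun m => ?_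
    push_cast
    ring_nf
  have h := tsum_even_add_odd (f := fun n : ℕ => 1 / (n : ℝ) ^ 3) he ho
  rw [← z3_eq] at h
  have heven : ∑' k : ℕ, 1 / ((2 * k : ℕ) : ℝ) ^ 3 = 1 / 8 * z3 := by
    rw [z3_eq, ← tsum_mul_left]
    refine tsum_congr fun m => ?_
    push_cast
    rcases Nat.eq_zero_or_pos m with rfl | hm
    · norm_num
    · have : ((m:ℝ)) ≠ 0 := Nat.cast_ne_zero.mpr hm.ne'
      field_simp
      ring
  have hodd : ∑' k : ℕ, 1 / ((2 * k + 1 : ℕ) : ℝ) ^ 3 = ∑' m : ℕ, 1 / (2 * (m : ℝ) + 1) ^ 3 :=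
    tsum_congr fun m => by push_cast; ring_nf
  rw [heven, hodd] at h
  linarith

lemma sumB : ∑' m : ℕ, 1 / (3/2 + (m : ℝ)) ^ 3 = 7 * z3 - 8 := by
  have h1 : ∑' m : ℕ, 1 / (2 * (m : ℝ) + 3) ^ 3 = 7 / 8 * z3 - 1 := by
    have h := Summable.tsum_eq_zero_add summable_odd
    rw [sum_odd] at h
    have h2 : (fun m : ℕ => 1 / (2 * ((m + 1 : ℕ) : ℝ) + 1) ^ 3)
        = fun m : ℕ => 1 / (2 * (m : ℝ) + 3) ^ 3 := by
      funext m; push_cast; ring_nf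
    rw [h2] at h
    have h0 : 1 / (2 * ((0:ℕ):ℝ) + 1) ^ 3 = 1 := by norm_num
    rw [h0] at h
    linarith
  have key : (fun m : ℕ => 1 / (3/2 + (m : ℝ)) ^ 3)
      = fun m : ℕ => 8 * (1 / (2 * (m : ℝ) + 3) ^ 3) := by
    funext m
    have d1 : (0:ℝ) < 3/2 + m := by positivity
    have d2 : (0:ℝ) < 2 * (m:ℝ) + 3 := by positivity
    rw [mul_one_div, div_eq_div_iff (by positivity) (by positivity)]
    ring
  rw [key, tsum_mul_left, h1]
  ring

lemma tsum_c_one : ∑' m : ℕ, cfun (1 + (m : ℝ)) = 15 - 12 * z3 := by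
  have hA : Summable (fun m : ℕ => 1 / (1 + (m : ℝ)) ^ 3) :=
    summable_shift one_pos (by norm_num)
  have hB : Summable (fun m : ℕ => 1 / (3/2 + (m : ℝ)) ^ 3) :=
    summable_shift (by norm_num : (0:ℝ) < 3/2) (by norm_num)
  have hC : Summable (fun m : ℕ => 1 / (2 + (m : ℝ)) ^ 3) :=
    summable_shift (by norm_num : (0:ℝ) < 2) (by norm_num)
  have key : (fun m : ℕ => cfun (1 + (m : ℝ)))
      = fun m : ℕ => 1 / (1 + (m : ℝ)) ^ 3 - 2 * (1 / (3/2 + (m : ℝ)) ^ 3)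
          + 1 / (2 + (m : ℝ)) ^ 3 := by
    funext m
    unfold cfun
    have e1 : 1 + (m:ℝ) + 1/2 = 3/2 + m := by ring
    have e2 : 1 + (m:ℝ) + 1 = 2 + m := by ring
    rw [e1, e2, mul_one_div]
  rw [key, Summable.tsum_add (hA.sub (hB.mul_left 2)) hC, Summable.tsum_sub hA (hB.mul_left 2), tsum_mul_left,
    sumA, sumB, sumC]
  ring

lemma G_pos {x : ℝ} (hx : 0 < x) : 0 < ∑' m : ℕ, cfun (x + m) := by
  refine Summable.tsum_pos (hasSum_G hx).summable (fun m => (cfun_pos (by positivity)).le) 0 ?_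
  have : x + ((0:ℕ):ℝ) = x := by norm_num
  rw [this]
  exact cfun_pos hx

lemma G_lt {x : ℝ} (hx : 1 < x) : ∑' m : ℕ, cfun (x + m) < 15 - 12 * z3 := by
  have hx0 : (0:ℝ) < x := by linarith
  rw [← tsum_c_one]
  refine Summable.tsum_lt_tsum (f := fun m : ℕ => cfun (x + m)) (g := fun m : ℕ => cfun (1 + m)) (i := 0)
    (fun m => ?_) ?_ (hasSum_G hx0).summable ?_
  · exact (cfun_strictAnti (by positivity : (0:ℝ) < 1 + (m:ℝ))
      (by positivity : (0:ℝ) < x + (m:ℝ)) (by linarith)).le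
  · exact cfun_strictAnti (by norm_num : (0:ℝ) < 1 + ((0:ℕ):ℝ))
      (by positivity : (0:ℝ) < x + ((0:ℕ):ℝ)) (by push_cast; linarith)
  · have := (hasSum_G one_pos).summable
    exact this


noncomputable def S1 (x : ℝ) : ℝ := ∑' m : ℕ, (1 / ((m : ℝ) + 1) - 1 / (x + m))
noncomputable def dg (x : ℝ) : ℝ := -Real.eulerMascheroniConstant + S1 x
noncomputable def gseq (n : ℕ) (x : ℝ) : ℝ :=
  Real.log n - ∑ m ∈ Finset.range (n + 1), 1 / (x + m)

lemma TUO_succ {F : ℕ → ℝ → ℝ} {f : ℝ → ℝ} {s : Set ℝ}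
    (h : TendstoUniformlyOn F f atTop s) : TendstoUniformlyOn (fun n => F (n + 1)) f atTop s :=
  fun u hu => (Filter.tendsto_add_atTop_nat 1).eventually (h u hu)

lemma TUO_const {c : ℕ → ℝ} {L : ℝ} (h : Tendsto c atTop (𝓝 L)) (s : Set ℝ) :
    TendstoUniformlyOn (fun n (_ : ℝ) => c n) (fun _ => L) atTop s := by
  intro u hu
  filter_upwards [h (mem_nhds_left L hu)] with n hn x _
  exact hn

lemma locUnif {F : ℕ → ℝ → ℝ} {f : ℝ → ℝ}
    (h : ∀ a b : ℝ, 0 < a → TendstoUniformlyOn F f atTop (Icc a b)) :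
    TendstoLocallyUniformlyOn F f atTop (Ioi 0) := by
  rw [tendstoLocallyUniformlyOn_iff_forall_isCompact isOpen_Ioi]
  intro K hKs hK
  rcases K.eq_empty_or_nonempty with rfl | hne
  · exact tendstoUniformlyOn_empty
  · have h1 : sInf K ∈ K := hK.sInf_mem hne
    refine (h (sInf K) (sSup K) (hKs h1)).mono fun x hx =>
      ⟨csInf_le hK.bddBelow hx, le_csSup hK.bddAbove hx⟩

lemma harm_eq (N : ℕ) : ((harmonic N : ℚ) : ℝ) = ∑ m ∈ Finset.range N, 1 / ((m : ℝ) + 1) := by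
  simp only [harmonic]
  push_cast
  refine Finset.sum_congr rfl fun i _ => ?_
  rw [one_div]

lemma tendsto_const_part :
    Tendsto (fun n : ℕ => Real.log n - ((harmonic (n + 1) : ℚ) : ℝ)) atTop
      (𝓝 (-Real.eulerMascheroniConstant)) := by
  have hneg : Tendsto (fun n : ℕ => Real.log n - ((harmonic n : ℚ) : ℝ)) atTop
      (𝓝 (-Real.eulerMascheroniConstant)) := by
    have := Real.tendsto_harmonic_sub_log.neg
    simpa [neg_sub] using this
  have hinv : Tendsto (fun n : ℕ => 1 / ((n : ℝ) + 1)) atTop (𝓝 0) :=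
    tendsto_one_div_add_atTop_nhds_zero_nat
  have h := hneg.sub hinv
  rw [sub_zero] at h
  refine h.congr fun n => ?_
  rw [harmonic_succ]
  push_cast
  ring

lemma summable_S1 {x : ℝ} (hx : 0 < x) :
    Summable (fun m : ℕ => 1 / ((m : ℝ) + 1) - 1 / (x + m)) := by
  refine ((summable_prod hx).mul_left (x - 1)).congr fun m => ?_
  have h1 : ((m : ℝ) + 1) ≠ 0 := by positivity
  have h2 : x + (m : ℝ) ≠ 0 := by positivity
  field_simp
  ring

lemma L1unif : TendstoLocallyUniformlyOn gseq dg atTop (Ioi 0) := by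
  apply locUnif
  intro a b ha
  have h2 : TendstoUniformlyOn
      (fun (n : ℕ) (x : ℝ) => ∑ m ∈ Finset.range n, (1 / ((m : ℝ) + 1) - 1 / (x + m))) S1 atTop (Icc a b) := by
    refine tendstoUniformlyOn_tsum_nat
      (u := fun m : ℕ => (b + 1) * (1 / (((m : ℝ) + 1) * (a + m))))
      ((summable_prod ha).mul_left (b + 1)) (fun m x hx => ?_)
    have hxa : a ≤ x := hx.1
    have hxb : x ≤ b := hx.2
    have hx0 : 0 < x := lt_of_lt_of_le ha hxa
    have hb0 : 0 < b := lt_of_lt_of_le (lt_of_lt_of_le ha hxa) hxb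
    have e : 1 / ((m : ℝ) + 1) - 1 / (x + m) = (x - 1) * (1 / (((m : ℝ) + 1) * (x + m))) := by
      have h1 : ((m : ℝ) + 1) ≠ 0 := by positivity
      have h2 : x + (m : ℝ) ≠ 0 := by positivity
      field_simp
      ring
    rw [e, Real.norm_eq_abs, abs_mul]
    have hb1 : |x - 1| ≤ b + 1 := by
      rw [abs_le]
      constructor <;> nlinarith
    have hb2 : |1 / (((m : ℝ) + 1) * (x + m))| ≤ 1 / (((m : ℝ) + 1) * (a + m)) := by
      rw [abs_of_nonneg (by positivity)]
      apply one_div_le_one_div_of_le (by positivity)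
      have : a + (m : ℝ) ≤ x + m := by linarith
      nlinarith [Nat.cast_nonneg (α := ℝ) m]
    exact mul_le_mul hb1 hb2 (abs_nonneg _) (by linarith)
  have h1 : TendstoUniformlyOn
      (fun (n : ℕ) (_ : ℝ) => Real.log n - ((harmonic (n + 1) : ℚ) : ℝ)) (fun _ => -Real.eulerMascheroniConstant)
      atTop (Icc a b) := TUO_const tendsto_const_part _
  have h := h1.add (TUO_succ h2)
  refine (h.congr (Eventually.of_forall fun n x hx => ?_)).congr_right fun x _ => ?_
  · show Real.log n - ((harmonic (n + 1) : ℚ) : ℝ)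
        + ∑ m ∈ Finset.range (n + 1), (1 / ((m : ℝ) + 1) - 1 / (x + m)) = gseq n x
    rw [Finset.sum_sub_distrib, harm_eq]
    unfold gseq
    ring
  · show -Real.eulerMascheroniConstant + S1 x = dg x
    rfl

lemma L2unif : TendstoLocallyUniformlyOn
    (fun (n : ℕ) (x : ℝ) => ∑ m ∈ Finset.range (n + 1), 1 / (x + m) ^ 2) trig atTop (Ioi 0) := by
  apply locUnif
  intro a b ha
  refine TUO_succ (tendstoUniformlyOn_tsum_nat (u := fun m : ℕ => 1 / (a + m) ^ 2)
    (summable_shift ha (by norm_num : (1:ℕ) < 2)) (fun m x hx => ?_))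
  have hx0 : 0 < x := lt_of_lt_of_le ha hx.1
  rw [Real.norm_eq_abs, abs_of_nonneg (by positivity)]
  apply one_div_le_one_div_of_le (by positivity)
  have : a + (m : ℝ) ≤ x + m := by linarith [hx.1]
  exact pow_le_pow_left₀ (by positivity) this 2

lemma L3unif : TendstoLocallyUniformlyOn
    (fun (n : ℕ) (x : ℝ) => ∑ m ∈ Finset.range n, -2 / (x + m) ^ 3) tet atTop (Ioi 0) := by
  apply locUnif
  intro a b ha
  refine tendstoUniformlyOn_tsum_nat (u := fun m : ℕ => 2 * (1 / (a + m) ^ 3))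
    ((summable_shift ha (by norm_num : (1:ℕ) < 3)).mul_left 2) (fun m x hx => ?_)
  have hx0 : 0 < x := lt_of_lt_of_le ha hx.1
  have hb : 2 * (1 / (x + (m:ℝ)) ^ 3) ≤ 2 * (1 / (a + (m:ℝ)) ^ 3) := by
    apply mul_le_mul_of_nonneg_left _ (by norm_num)
    apply one_div_le_one_div_of_le (by positivity)
    exact pow_le_pow_left₀ (by positivity) (by linarith [hx.1] : a + (m:ℝ) ≤ x + m) 3
  calc ‖-2 / (x + (m:ℝ)) ^ 3‖ = 2 * (1 / (x + (m:ℝ)) ^ 3) := by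
        rw [Real.norm_eq_abs, abs_div, abs_of_nonneg (by positivity : (0:ℝ) ≤ (x + (m:ℝ)) ^ 3),
          mul_one_div]
        norm_num
    _ ≤ _ := hb

lemma lgs_hasDeriv (n : ℕ) {x : ℝ} (hx : 0 < x) :
    HasDerivAt (fun y => Real.BohrMollerup.logGammaSeq y n) (gseq n x) x := by
  have hsum : HasDerivAt (fun y : ℝ => ∑ m ∈ Finset.range (n + 1), Real.log (y + m))
      (∑ m ∈ Finset.range (n + 1), 1 / (x + m)) x :=
    HasDerivAt.fun_sum fun m _ => hasDerivAt_log_shift m (by positivity)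
  have hlin : HasDerivAt (fun y : ℝ => y * Real.log n + Real.log (Nat.factorial n)) (Real.log n) x := by
    simpa using ((hasDerivAt_id x).mul_const (Real.log n)).add_const (Real.log (Nat.factorial n))
  have h := hlin.sub hsum
  exact h

lemma gseq_hasDeriv (n : ℕ) {x : ℝ} (hx : 0 < x) :
    HasDerivAt (gseq n) (∑ m ∈ Finset.range (n + 1), 1 / (x + m) ^ 2) x := by
  have hsum : HasDerivAt (fun y : ℝ => ∑ m ∈ Finset.range (n + 1), 1 / (y + m))
      (∑ m ∈ Finset.range (n + 1), -(1 / (x + m) ^ 2)) x :=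
    HasDerivAt.fun_sum fun m _ => hasDerivAt_one_div_shift m (by positivity)
  have h := hsum.const_sub (Real.log n)
  have e : -∑ m ∈ Finset.range (n + 1), -(1 / (x + m) ^ 2)
      = ∑ m ∈ Finset.range (n + 1), 1 / (x + m) ^ 2 := by
    rw [Finset.sum_neg_distrib, neg_neg]
  rw [e] at h
  exact h

lemma trig_hasDeriv : ∀ y ∈ Ioi (0:ℝ), HasDerivAt trig (tet y) y := by
  intro y hy
  refine hasDerivAt_of_tendstoLocallyUniformlyOn
    (f := fun (n : ℕ) (x : ℝ) => ∑ m ∈ Finset.range n, 1 / (x + m) ^ 2)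
    isOpen_Ioi L3unif (Eventually.of_forall fun n z hz => ?_) (fun z hz => ?_) hy
  · have h0 : (0:ℝ) < z := hz
    exact HasDerivAt.fun_sum fun m _ => hasDerivAt_one_div_sq m (by positivity)
  · exact (summable_shift hz (by norm_num : (1:ℕ) < 2)).hasSum.tendsto_sum_nat

lemma hg : ∀ y ∈ Ioi (0:ℝ), HasDerivAt (fun t => Real.log (Real.Gamma t)) (dg y) y := by
  intro y hy
  exact hasDerivAt_of_tendstoLocallyUniformlyOn
    (f := fun (n : ℕ) (y : ℝ) => Real.BohrMollerup.logGammaSeq y n)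
    isOpen_Ioi L1unif (Eventually.of_forall fun n z hz => lgs_hasDeriv n hz)
    (fun z hz => Real.BohrMollerup.tendsto_log_gamma hz) hy

lemma hdg : ∀ y ∈ Ioi (0:ℝ), HasDerivAt dg (trig y) y := by
  intro y hy
  exact hasDerivAt_of_tendstoLocallyUniformlyOn (f := gseq)
    isOpen_Ioi L2unif (Eventually.of_forall fun n z hz => gseq_hasDeriv n hz)
    (fun z hz => L1unif.tendsto_at hz) hy


end Aux14

open Aux14 in
lemma Aux14.deriv2_eq {x : ℝ} (hx : 0 < x) : deriv^[2] digamma x = tet x := by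
  have hEq1 : Set.EqOn digamma dg (Ioi 0) := by
    intro y hy
    have h := (hg y hy).deriv
    simpa [digamma] using h
  have hEq2 : Set.EqOn (deriv digamma) trig (Ioi 0) := by
    intro y hy
    have h1 : deriv digamma y = deriv dg y :=
      Filter.EventuallyEq.deriv_eq (Filter.eventuallyEq_of_mem (isOpen_Ioi.mem_nhds hy) hEq1)
    rw [h1, (hdg y hy).deriv]
  have h2 : deriv^[2] digamma x = deriv (deriv digamma) x := by
    rw [Function.iterate_succ_apply', Function.iterate_one]
  have h3 : deriv (deriv digamma) x = deriv trig x :=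
    Filter.EventuallyEq.deriv_eq (Filter.eventuallyEq_of_mem (isOpen_Ioi.mem_nhds hx) hEq2)
  rw [h2, h3, (trig_hasDeriv x hx).deriv]

theorem stmt_14 (x : ℝ) (hx : 1 < x) :
    1 / x ^ 3 < deriv^[2] digamma (x + 1/2) - deriv^[2] digamma x ∧
    deriv^[2] digamma (x + 1/2) - deriv^[2] digamma x <
      1 / x ^ 3 + 15 - 12 * (riemannZeta 3).re := by
  have hx0 : (0:ℝ) < x := by linarith
  have e1 : deriv^[2] digamma (x + 1/2) - deriv^[2] digamma x
      = Aux14.tet (x + 1/2) - Aux14.tet x := by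
    rw [Aux14.deriv2_eq (by linarith : (0:ℝ) < x + 1/2), Aux14.deriv2_eq hx0]
  have hG := (Aux14.hasSum_G hx0).tsum_eq
  have hpos := Aux14.G_pos hx0
  have hlt := Aux14.G_lt hx
  rw [hG] at hpos hlt
  unfold Aux14.z3 at hlt
  rw [e1]
  constructor
  · linarith
  · linarith
end
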